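/- arXiv:1705.01360 — 3 statements merged into one kernel-verified Lean document; each statement's English description precedes it below -/
import Mathlib

section
/- Let ∅ ≠ E ⊂ X be a closed set, let α < 0 and 1 < p < ∞ be such that codim_A(E) > α/(1−p), and set w = δ_E^{-α}. Then w belongs to the Muckenhoupt class A_p. -/
open MeasureTheory Metric Set
open scoped ENNReal NNReal

namespace ApDistance

noncomputable section

variable {X : Type*} [MetricSpace X] [MeasurableSpace X] [BorelSpace X]

/-- All balls of positive radius have positive and finite measure. -/
def BallsPosFinite (μ : Measure X) : Prop :=
  ∀ (x : X) (r : ℝ), 0 < r → 0 < μ (ball x r) ∧ μ (ball x r) < ∞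

/-- The measure `μ` is doubling with constant `C`. -/
def DoublingWith (μ : Measure X) (C : ℝ) : Prop :=
  ∀ (x : X) (r : ℝ), 0 < r → μ (ball x (2 * r)) ≤ ENNReal.ofReal C * μ (ball x r)

/-- The measure `μ` is doubling. -/
def Doubling (μ : Measure X) : Prop :=
  ∃ C : ℝ, 0 < C ∧ DoublingWith μ C

/-- The (quantitative) reverse doubling condition with exponent `η`. -/
def ReverseDoubling (μ : Measure X) (η : ℝ) : Prop :=
  ∃ C : ℝ, 0 < C ∧ ∀ (x y : X) (r R : ℝ), 0 < r → 0 < R → ball y r ⊆ ball x R →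
    μ (ball y r) ≤ ENNReal.ofReal (C * (r / R) ^ η) * μ (ball x R)

/-- Standing assumptions (S1)-(S2): `X` is unbounded, points have measure zero,
and all annuli are nonempty. -/
def StandingAssumptions (μ : Measure X) : Prop :=
  ¬ Bornology.IsBounded (univ : Set X) ∧ (∀ x : X, μ {x} = 0) ∧
    ∀ (x : X) (r R : ℝ), 0 < r → r < R → (ball x R \ ball x r).Nonempty

/-- Ahlfors `Q`-regularity of the metric measure space. -/
def AhlforsRegular (μ : Measure X) (Q : ℝ) : Prop :=
  ∃ C : ℝ, 1 ≤ C ∧ ∀ (x : X) (r : ℝ), 0 < r → ENNReal.ofReal r < EMetric.diam (univ : Set X) →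
    ENNReal.ofReal (C⁻¹ * r ^ Q) ≤ μ (ball x r) ∧ μ (ball x r) ≤ ENNReal.ofReal (C * r ^ Q)

/-- The set of admissible exponents in the definition of the (upper) Assouad dimension:
`E ∩ B(x,R)` can be covered by at most `C (R/r)^s` balls of radius `r`. -/
def assouadDimBddSet (E : Set X) : Set ℝ :=
  {s : ℝ | 0 ≤ s ∧ ∃ C : ℝ, 1 ≤ C ∧ ∀ x ∈ E, ∀ r R : ℝ, 0 < r → r < R →
    ENNReal.ofReal R < 2 * EMetric.diam (univ : Set X) →
    ∃ F : Finset X, (F.card : ℝ) ≤ C * (R / r) ^ s ∧ E ∩ ball x R ⊆ ⋃ y ∈ F, ball y r}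

/-- The (upper) Assouad dimension of a set `E`. -/
def assouadDim (E : Set X) : ℝ := sInf (assouadDimBddSet E)

/-- The set of admissible exponents in the definition of the lower Assouad codimension. -/
def assouadCodimBddSet (μ : Measure X) (E : Set X) : Set ℝ :=
  {ρ : ℝ | 0 ≤ ρ ∧ ∃ C : ℝ, 1 ≤ C ∧ ∀ x ∈ E, ∀ r R : ℝ, 0 < r → r < R →
    ENNReal.ofReal R < 2 * EMetric.diam (univ : Set X) →
    μ ({y : X | infDist y E < r} ∩ ball x R) ≤
      ENNReal.ofReal (C * (r / R) ^ ρ) * μ (ball x R)}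

/-- The lower Assouad codimension of a set `E` with respect to `μ`. -/
def assouadCodim (μ : Measure X) (E : Set X) : ℝ := sSup (assouadCodimBddSet μ E)

/-- Porosity of a set `E ⊆ X`. -/
def IsPorous (E : Set X) : Prop :=
  ∃ c : ℝ, 0 < c ∧ c < 1 ∧ ∀ x ∈ E, ∀ r : ℝ, 0 < r →
    ENNReal.ofReal r < 2 * EMetric.diam (univ : Set X) →
    ∃ y : X, ball y (c * r) ⊆ ball x r \ E

/-- A weight: measurable, a.e. positive and finite, locally integrable on balls. -/
def IsWeight (μ : Measure X) (w : X → ℝ≥0∞) : Prop :=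
  Measurable w ∧ (∀ᵐ x ∂μ, 0 < w x ∧ w x ≠ ∞) ∧
    ∀ (x : X) (r : ℝ), 0 < r → ∫⁻ y in ball x r, w y ∂μ ≠ ∞

/-- Membership in the Muckenhoupt class `A_p`, `1 < p < ∞`. -/
def MemAp (μ : Measure X) (w : X → ℝ≥0∞) (p : ℝ) : Prop :=
  IsWeight μ w ∧ ∃ A : ℝ, 0 < A ∧ ∀ (x : X) (r : ℝ), 0 < r →
    ((∫⁻ y in ball x r, w y ∂μ) / μ (ball x r)) *
      ((∫⁻ y in ball x r, w y ^ (-(1 / (p - 1))) ∂μ) / μ (ball x r)) ^ (p - 1) ≤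
      ENNReal.ofReal A

/-- Membership in the Muckenhoupt class `A_1`. -/
def MemA1 (μ : Measure X) (w : X → ℝ≥0∞) : Prop :=
  IsWeight μ w ∧ ∃ A : ℝ, 0 < A ∧ ∀ (x : X) (r : ℝ), 0 < r →
    ((∫⁻ y in ball x r, w y ∂μ) / μ (ball x r)) *
      essSup (fun y => (w y)⁻¹) (μ.restrict (ball x r)) ≤ ENNReal.ofReal A

/-- Membership in the Muckenhoupt class `A_∞`. -/
def MemAinfty (μ : Measure X) (w : X → ℝ≥0∞) : Prop :=
  IsWeight μ w ∧ ∃ C d : ℝ, 0 < C ∧ 0 < d ∧ ∀ (x : X) (r : ℝ), 0 < r →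
    ∀ F : Set X, MeasurableSet F → F ⊆ ball x r →
      ∫⁻ y in F, w y ∂μ ≤
        ENNReal.ofReal C * (μ F / μ (ball x r)) ^ d * ∫⁻ y in ball x r, w y ∂μ

/-- The weight `w = δ_E^{-α} = dist(·,E)^{-α}` (with values in `ℝ≥0∞`). -/
def distWeight (E : Set X) (α : ℝ) : X → ℝ≥0∞ :=
  fun x => ENNReal.ofReal (infDist x E) ^ (-α)

/-- The Aikawa condition with exponent `α` and constant `C`. -/
def AikawaCondition (μ : Measure X) (E : Set X) (α C : ℝ) : Prop :=
  ∀ x ∈ E, ∀ r : ℝ, 0 < r → ENNReal.ofReal r < 2 * EMetric.diam (univ : Set X) →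
    ∫⁻ y in ball x r, ENNReal.ofReal (infDist y E) ^ (-α) ∂μ ≤
      ENNReal.ofReal (C * r ^ (-α)) * μ (ball x r)

/-- The Riesz potential `I_s f`. -/
def rieszPotential (μ : Measure X) (s : ℝ) (f : X → ℝ≥0∞) (x : X) : ℝ≥0∞ :=
  ∫⁻ y, f y * ENNReal.ofReal (dist x y ^ s) / μ (ball x (dist x y)) ∂μ

/-- `Lip_0(X)`: Lipschitz functions vanishing outside some ball. -/
def MemLip0 (f : X → ℝ) : Prop :=
  (∃ K : ℝ≥0, LipschitzWith K f) ∧ ∃ (x : X) (r : ℝ), ∀ y : X, y ∉ ball x r → f y = 0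

/-- The `λ`-chain condition. -/
def ChainCondition (X : Type*) [MetricSpace X] (lam : ℝ) : Prop :=
  ∃ M : ℝ, 1 ≤ M ∧ ∀ (x : X) (r R : ℝ), 0 < r → r < R →
    ∃ (k : ℕ) (c : ℕ → X) (ρ : ℕ → ℝ),
      (∀ i ≤ k, 0 < ρ i) ∧
      ball (c 0) (lam * ρ 0) ⊆ (ball x R)ᶜ ∧
      ball (c k) (lam * ρ k) ⊆ ball x r ∧
      (∀ i ≤ k,
        M⁻¹ * Metric.diam (ball (c i) (lam * ρ i)) ≤ infDist x (ball (c i) (lam * ρ i)) ∧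
        infDist x (ball (c i) (lam * ρ i)) ≤ M * Metric.diam (ball (c i) (lam * ρ i))) ∧
      (∀ i < k, ∃ (z : X) (t : ℝ), 0 < t ∧
        ball z t ⊆ ball (c i) (ρ i) ∩ ball (c (i + 1)) (ρ (i + 1)) ∧
        ball (c i) (ρ i) ∪ ball (c (i + 1)) (ρ (i + 1)) ⊆ ball z (M * t)) ∧
      (∀ y : X, (({i : ℕ | i ≤ k ∧ y ∈ ball (c i) (lam * ρ i)}).ncard : ℝ) ≤ M)

/-- The inner integral appearing in fractional Hardy–Sobolev inequalities:
`y ↦ ∫_X |f(y)-f(z)|^t / (d(y,z)^{st} μ(B(y,d(y,z)))) dμ(z)`. -/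
def fracEnergyKernel (μ : Measure X) (s t : ℝ) (f : X → ℝ) (y : X) : ℝ≥0∞ :=
  ∫⁻ z, ENNReal.ofReal (|f y - f z| ^ t) /
    (ENNReal.ofReal (dist y z ^ (s * t)) * μ (ball y (dist y z))) ∂μ


/-! ### Auxiliary lemmas -/

set_option linter.unusedSectionVars false

lemma measurable_distW (E : Set X) (c : ℝ) :
    Measurable fun y : X => ENNReal.ofReal (infDist y E) ^ c :=
  ENNReal.continuous_rpow_const.measurable.comp
    ((continuous_infDist_pt E).measurable.ennreal_ofReal)

lemma setLIntegral_le_of_bound' (μ : Measure X) (s : Set X)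
    (f : X → ℝ≥0∞) (c : ℝ≥0∞) (h : ∀ y ∈ s, f y ≤ c) :
    ∫⁻ y in s, f y ∂μ ≤ c * μ s := by
  calc ∫⁻ y in s, f y ∂μ ≤ ∫⁻ _ in s, c ∂μ := setLIntegral_mono measurable_const h
    _ = c * μ s := setLIntegral_const s c

lemma ofReal_rpow_le_pos {a M e : ℝ} (he : 0 < e) (hM : 0 < M) (h : a ≤ M) :
    ENNReal.ofReal a ^ e ≤ ENNReal.ofReal (M ^ e) := by
  rw [← ENNReal.ofReal_rpow_of_pos hM]
  exact ENNReal.rpow_le_rpow (ENNReal.ofReal_le_ofReal h) he.le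

lemma ofReal_rpow_le_neg {a m e : ℝ} (he : e < 0) (hm : 0 < m) (h : m ≤ a) :
    ENNReal.ofReal a ^ e ≤ ENNReal.ofReal (m ^ e) := by
  rw [← ENNReal.ofReal_rpow_of_pos hm]
  have h1 : ENNReal.ofReal m ^ e = (ENNReal.ofReal m ^ (-e))⁻¹ := by
    rw [← ENNReal.rpow_neg, neg_neg]
  have h2 : ENNReal.ofReal a ^ e = (ENNReal.ofReal a ^ (-e))⁻¹ := by
    rw [← ENNReal.rpow_neg, neg_neg]
  rw [h1, h2]
  exact ENNReal.inv_le_inv.mpr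
    (ENNReal.rpow_le_rpow (ENNReal.ofReal_le_ofReal h) (by linarith))

lemma pow_rpow_comm {q : ℝ} (hq : 0 ≤ q) (e : ℝ) (n : ℕ) :
    (q ^ n) ^ e = (q ^ e) ^ n := by
  rw [← Real.rpow_natCast q n, ← Real.rpow_natCast (q ^ e) n,
    ← Real.rpow_mul hq, ← Real.rpow_mul hq, mul_comm]

lemma doubling_two (μ : Measure X) {CD : ℝ} (hCD : 0 < CD) (hdb : DoublingWith μ CD)
    (x : X) {r : ℝ} (hr : 0 < r) :
    μ (ball x (4 * r)) ≤ ENNReal.ofReal (CD ^ 2) * μ (ball x r) := by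
  have h1 := hdb x (2 * r) (by linarith)
  have h2 := hdb x r hr
  have e : (4 : ℝ) * r = 2 * (2 * r) := by ring
  rw [e]
  calc μ (ball x (2 * (2 * r))) ≤ ENNReal.ofReal CD * μ (ball x (2 * r)) := h1
    _ ≤ ENNReal.ofReal CD * (ENNReal.ofReal CD * μ (ball x r)) := mul_le_mul_right h2 _
    _ = ENNReal.ofReal (CD ^ 2) * μ (ball x r) := by
        rw [← mul_assoc, ← ENNReal.ofReal_mul hCD.le, sq]

lemma doubling_three (μ : Measure X) {CD : ℝ} (hCD : 0 < CD) (hdb : DoublingWith μ CD)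
    (x : X) {r : ℝ} (hr : 0 < r) :
    μ (ball x (8 * r)) ≤ ENNReal.ofReal (CD ^ 3) * μ (ball x r) := by
  have h1 := hdb x (4 * r) (by linarith)
  have h2 := doubling_two μ hCD hdb x hr
  have e : (8 : ℝ) * r = 2 * (4 * r) := by ring
  rw [e]
  calc μ (ball x (2 * (4 * r))) ≤ ENNReal.ofReal CD * μ (ball x (4 * r)) := h1
    _ ≤ ENNReal.ofReal CD * (ENNReal.ofReal (CD ^ 2) * μ (ball x r)) := mul_le_mul_right h2 _
    _ = ENNReal.ofReal (CD ^ 3) * μ (ball x r) := by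
        rw [← mul_assoc, ← ENNReal.ofReal_mul hCD.le]; ring_nf

lemma diam_pos [Nontrivial X] (hdiam : EMetric.diam (univ : Set X) ≠ ⊤) :
    0 < (EMetric.diam (univ : Set X)).toReal := by
  obtain ⟨a, b, hab⟩ := exists_pair_ne X
  have h1 : edist a b ≤ EMetric.diam (univ : Set X) :=
    EMetric.edist_le_diam_of_mem trivial trivial
  have h2 : (0 : ℝ≥0∞) < edist a b := by simpa [edist_pos] using hab
  exact ENNReal.toReal_pos (ne_of_gt (lt_of_lt_of_le h2 h1)) hdiam

lemma dist_le_diam (hdiam : EMetric.diam (univ : Set X) ≠ ⊤) (y z : X) :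
    dist y z ≤ (EMetric.diam (univ : Set X)).toReal := by
  rw [dist_edist]
  exact ENNReal.toReal_mono hdiam (EMetric.edist_le_diam_of_mem trivial trivial)

lemma two_mul_diam_eq (hdiam : EMetric.diam (univ : Set X) ≠ ⊤) :
    2 * EMetric.diam (univ : Set X) =
      ENNReal.ofReal (2 * (EMetric.diam (univ : Set X)).toReal) := by
  rw [ENNReal.ofReal_mul (by norm_num), ENNReal.ofReal_ofNat,
    ENNReal.ofReal_toReal hdiam]

lemma null_E (μ : Measure X) (hballs : BallsPosFinite μ) (E : Set X) (hE : E.Nonempty)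
    [Nontrivial X]
    {ρ C : ℝ} (hρ : 0 < ρ) (hC : 0 < C)
    (hcod : ∀ x ∈ E, ∀ r R : ℝ, 0 < r → r < R →
      ENNReal.ofReal R < 2 * EMetric.diam (univ : Set X) →
      μ ({y : X | infDist y E < r} ∩ ball x R) ≤
        ENNReal.ofReal (C * (r / R) ^ ρ) * μ (ball x R)) :
    μ E = 0 := by
  obtain ⟨x₀, hx₀⟩ := hE
  have key : ∀ R : ℝ, 0 < R → ENNReal.ofReal R < 2 * EMetric.diam (univ : Set X) →
      μ (E ∩ ball x₀ R) = 0 := by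
    intro R hR hRd
    set g0 : ℝ := (1/2 : ℝ) ^ ρ with hg0def
    have hg00 : 0 < g0 := Real.rpow_pos_of_pos (by norm_num) _
    have hg01 : g0 < 1 := Real.rpow_lt_one (by norm_num) (by norm_num) hρ
    have hb : ∀ n : ℕ, μ (E ∩ ball x₀ R) ≤
        ENNReal.ofReal (C * g0 ^ (n+1)) * μ (ball x₀ R) := by
      intro n
      have hq : (0:ℝ) < (1/2 : ℝ)^(n+1) := by positivity
      have hr : (0:ℝ) < R * (1/2 : ℝ)^(n+1) := by positivity
      have hq1 : ((1:ℝ)/2)^(n+1) < 1 := pow_lt_one₀ (by norm_num) (by norm_num) (Nat.succ_ne_zero n)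
      have hlt : R * (1/2 : ℝ)^(n+1) < R := by nlinarith
      have hc := hcod x₀ hx₀ (R * (1/2)^(n+1)) R hr hlt hRd
      have hdiv : R * (1/2 : ℝ)^(n+1) / R = (1/2 : ℝ)^(n+1) := by field_simp
      rw [hdiv, pow_rpow_comm (by norm_num) ρ (n+1)] at hc
      refine le_trans (measure_mono (fun y hy => ?_)) hc
      refine ⟨?_, hy.2⟩
      show infDist y E < R * (1/2 : ℝ)^(n+1)
      rw [infDist_zero_of_mem hy.1]
      exact hr
    have hμt := (hballs x₀ R hR).2.ne
    have htend : Filter.Tendsto (fun n : ℕ => ENNReal.ofReal (C * g0 ^ (n+1)) * μ (ball x₀ R))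
        Filter.atTop (nhds 0) := by
      have h1 : Filter.Tendsto (fun n : ℕ => g0 ^ (n+1)) Filter.atTop (nhds 0) :=
        (tendsto_pow_atTop_nhds_zero_of_lt_one hg00.le hg01).comp (Filter.tendsto_add_atTop_nat 1)
      have h2 : Filter.Tendsto (fun n : ℕ => C * g0 ^ (n+1)) Filter.atTop (nhds 0) := by
        simpa using h1.const_mul C
      have h3 : Filter.Tendsto (fun n : ℕ => ENNReal.ofReal (C * g0 ^ (n+1)))
          Filter.atTop (nhds 0) := by
        simpa using ENNReal.tendsto_ofReal h2
      simpa using ENNReal.Tendsto.mul_const h3 (Or.inr hμt)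
    have hle : μ (E ∩ ball x₀ R) ≤ 0 :=
      le_of_tendsto_of_tendsto' tendsto_const_nhds htend hb
    exact le_antisymm hle zero_le
  by_cases hdiam : EMetric.diam (univ : Set X) = ⊤
  · have hcover : E ⊆ ⋃ n : ℕ, E ∩ ball x₀ (n+1) := by
      intro y hy
      obtain ⟨n, hn⟩ := exists_nat_gt (dist y x₀)
      refine mem_iUnion.mpr ⟨n, hy, ?_⟩
      rw [mem_ball]
      linarith
    refine measure_mono_null hcover (measure_iUnion_null fun n => key (n+1) (by positivity) ?_)
    rw [hdiam, ENNReal.mul_top (by norm_num)]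
    exact ENNReal.ofReal_lt_top
  · set D := (EMetric.diam (univ : Set X)).toReal with hDdef
    have hD0 : 0 < D := diam_pos hdiam
    have hsub : E ⊆ E ∩ ball x₀ ((3/2)*D) := fun y hy =>
      ⟨hy, by rw [mem_ball]; linarith [dist_le_diam hdiam y x₀]⟩
    refine measure_mono_null hsub (key _ (by linarith) ?_)
    rw [two_mul_diam_eq hdiam]
    exact (ENNReal.ofReal_lt_ofReal_iff (by linarith)).mpr (by linarith)

lemma aikawa (μ : Measure X) (E : Set X) (hE : E.Nonempty) (hEc : IsClosed E)
    (hEnull : μ E = 0)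
    {β ρ C : ℝ} (hβ : 0 < β) (hβρ : β < ρ) (hC : 0 < C)
    (hcod : ∀ x ∈ E, ∀ r R : ℝ, 0 < r → r < R →
      ENNReal.ofReal R < 2 * EMetric.diam (univ : Set X) →
      μ ({y : X | infDist y E < r} ∩ ball x R) ≤
        ENNReal.ofReal (C * (r / R) ^ ρ) * μ (ball x R)) :
    ∃ C' : ℝ, 0 < C' ∧ ∀ x₁ ∈ E, ∀ t : ℝ, 0 < t →
      ENNReal.ofReal t < 2 * EMetric.diam (univ : Set X) →
      ∫⁻ y in ball x₁ t, ENNReal.ofReal (infDist y E) ^ (-β) ∂μ ≤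
        ENNReal.ofReal (C' * t ^ (-β)) * μ (ball x₁ t) := by
  classical
  set q : ℝ := 1/2 with hqdef
  have hq0 : (0:ℝ) < q := by norm_num
  have hq1 : q < 1 := by norm_num
  set g : ℝ := q ^ (ρ - β) with hgdef
  have hg0 : 0 < g := Real.rpow_pos_of_pos hq0 _
  have hg1 : g < 1 := Real.rpow_lt_one hq0.le hq1 (by linarith)
  have hg1' : 0 < 1 - g := by linarith
  set K : ℝ := q ^ (-β) + C * (q ^ (-β))^2 * q ^ ρ * (1 - g)⁻¹ with hKdef
  have hqb : 0 < q ^ (-β) := Real.rpow_pos_of_pos hq0 _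
  have hqr : 0 < q ^ ρ := Real.rpow_pos_of_pos hq0 _
  have hK : 0 < K := by positivity
  refine ⟨K, hK, ?_⟩
  intro x₁ hx₁ t ht htd
  set f : X → ℝ≥0∞ := fun y => ENNReal.ofReal (infDist y E) ^ (-β) with hfdef
  set B : Set X := ball x₁ t with hBdef
  set T : Set X := {y ∈ B | t * q ≤ infDist y E} with hTdef
  set S : ℕ → Set X := fun k =>
    {y ∈ B | t * q^(k+2) ≤ infDist y E ∧ infDist y E < t * q^(k+1)} with hSdef
  have hBE : B =ᵐ[μ] (B \ E) := by
    refine MeasureTheory.ae_eq_set.mpr ?_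
    constructor
    · refine measure_mono_null (fun y hy => ?_) hEnull
      rcases hy with ⟨hyB, hyn⟩
      by_contra hyE
      exact hyn ⟨hyB, hyE⟩
    · exact measure_mono_null (fun y hy => (hy.2 hy.1.1).elim) (measure_empty (μ := μ))
  have hsub : B \ E ⊆ T ∪ ⋃ k, S k := by
    rintro y ⟨hyB, hyE⟩
    have hδpos : 0 < infDist y E := (hEc.notMem_iff_infDist_pos hE).mp hyE
    by_cases hT : t * q ≤ infDist y E
    · exact Or.inl ⟨hyB, hT⟩
    · push_neg at hT
      have hex : ∃ k, t * q^(k+1) ≤ infDist y E := by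
        obtain ⟨n, hn⟩ := exists_pow_lt_of_lt_one (div_pos hδpos ht) hq1
        refine ⟨n, ?_⟩
        have h1 : q^(n+1) ≤ q^n := pow_le_pow_of_le_one hq0.le hq1.le (Nat.le_succ n)
        have h2 : q^n * t < infDist y E := (lt_div_iff₀ ht).mp hn
        nlinarith
      have hm := Nat.find_spec hex
      have hm0 : Nat.find hex ≠ 0 := by
        intro h0
        rw [h0, pow_one] at hm
        linarith
      obtain ⟨k, hk⟩ := Nat.exists_eq_succ_of_ne_zero hm0
      refine Or.inr (mem_iUnion.mpr ⟨k, ⟨hyB, ?_, ?_⟩⟩)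
      · rw [hk] at hm
        exact hm
      · have hmin := Nat.find_min hex (show k < Nat.find hex by omega)
        push_neg at hmin
        exact hmin
  have hfT : ∫⁻ y in T, f y ∂μ ≤ ENNReal.ofReal ((t*q)^(-β)) * μ B := by
    have h1 : ∫⁻ y in T, f y ∂μ ≤ ENNReal.ofReal ((t*q)^(-β)) * μ T :=
      setLIntegral_le_of_bound' μ T f _ (fun y hy =>
        ofReal_rpow_le_neg (by linarith) (by positivity) hy.2)
    exact h1.trans (mul_le_mul_right (measure_mono (sep_subset _ _)) _)
  have hfS : ∀ k : ℕ, ∫⁻ y in S k, f y ∂μ ≤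
      ENNReal.ofReal ((t*q^(k+2))^(-β) * (C * ((q:ℝ)^(k+1))^ρ)) * μ B := by
    intro k
    have h1 : ∫⁻ y in S k, f y ∂μ ≤ ENNReal.ofReal ((t*q^(k+2))^(-β)) * μ (S k) :=
      setLIntegral_le_of_bound' μ (S k) f _ (fun y hy =>
        ofReal_rpow_le_neg (by linarith) (by positivity) hy.2.1)
    have h2 : μ (S k) ≤ ENNReal.ofReal (C * ((q:ℝ)^(k+1))^ρ) * μ B := by
      have hrlt : t * q^(k+1) < t := by
        have : q^(k+1) < 1 := pow_lt_one₀ hq0.le hq1 (Nat.succ_ne_zero k)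
        nlinarith
      have hc := hcod x₁ hx₁ (t * q^(k+1)) t (by positivity) hrlt htd
      have hdiv : t * q^(k+1) / t = q^(k+1) := by field_simp
      rw [hdiv] at hc
      calc μ (S k) ≤ μ ({y : X | infDist y E < t * q^(k+1)} ∩ B) :=
            measure_mono (fun y hy => ⟨hy.2.2, hy.1⟩)
        _ ≤ ENNReal.ofReal (C * ((q:ℝ)^(k+1))^ρ) * μ B := hc
    calc ∫⁻ y in S k, f y ∂μ ≤ ENNReal.ofReal ((t*q^(k+2))^(-β)) * μ (S k) := h1
      _ ≤ ENNReal.ofReal ((t*q^(k+2))^(-β)) *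
          (ENNReal.ofReal (C * ((q:ℝ)^(k+1))^ρ) * μ B) := mul_le_mul_right h2 _
      _ = ENNReal.ofReal ((t*q^(k+2))^(-β) * (C * ((q:ℝ)^(k+1))^ρ)) * μ B := by
          rw [← mul_assoc, ← ENNReal.ofReal_mul (by positivity)]
  set u : ℕ → ℝ := fun k => (t*q^(k+2))^(-β) * (C * ((q:ℝ)^(k+1))^ρ) with hudef
  set a : ℝ := C * t^(-β) * (q^(-β))^2 * q ^ ρ with hadef
  have hu : ∀ k, u k = a * g^k := by
    intro k
    have e1 : (t*q^(k+2))^(-β) = t^(-β) * (q^(-β))^(k+2) := by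
      rw [Real.mul_rpow ht.le (by positivity), pow_rpow_comm hq0.le]
    have e2 : ((q:ℝ)^(k+1))^ρ = (q^ρ)^(k+1) := pow_rpow_comm hq0.le _ _
    have e3 : g ^ k = (q^ρ)^k * (q^(-β))^k := by
      rw [← mul_pow, hgdef, ← Real.rpow_add hq0]
      ring_nf
    rw [hudef]
    simp only
    rw [e1, e2, hadef]
    rw [show g ^ k = (q^ρ)^k * (q^(-β))^k from e3]
    ring
  have hsummable : Summable u := by
    rw [show u = fun k => a * g^k from funext hu]
    exact (summable_geometric_of_lt_one hg0.le hg1).mul_left a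
  have htsum : ∑' k, u k = a * (1-g)⁻¹ := by
    rw [show u = fun k => a * g^k from funext hu, tsum_mul_left,
      tsum_geometric_of_lt_one hg0.le hg1]
  have ha0 : 0 < a := by positivity
  calc ∫⁻ y in B, f y ∂μ = ∫⁻ y in B \ E, f y ∂μ := setLIntegral_congr hBE
    _ ≤ ∫⁻ y in T ∪ ⋃ k, S k, f y ∂μ := lintegral_mono_set hsub
    _ ≤ (∫⁻ y in T, f y ∂μ) + ∫⁻ y in ⋃ k, S k, f y ∂μ := lintegral_union_le _ _ _
    _ ≤ (∫⁻ y in T, f y ∂μ) + ∑' k, ∫⁻ y in S k, f y ∂μ :=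
        add_le_add_right (lintegral_iUnion_le _ _) _
    _ ≤ ENNReal.ofReal ((t*q)^(-β)) * μ B + ∑' k, ENNReal.ofReal (u k) * μ B :=
        add_le_add hfT (ENNReal.tsum_le_tsum hfS)
    _ = (ENNReal.ofReal ((t*q)^(-β)) + ∑' k, ENNReal.ofReal (u k)) * μ B := by
        rw [ENNReal.tsum_mul_right, add_mul]
    _ ≤ ENNReal.ofReal (K * t^(-β)) * μ B := by
        refine mul_le_mul_left ?_ _
        rw [← ENNReal.ofReal_tsum_of_nonneg (fun k => by positivity) hsummable,
          ← ENNReal.ofReal_add (by positivity) (by rw [htsum]; positivity)]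
        refine ENNReal.ofReal_le_ofReal (le_of_eq ?_)
        rw [htsum, Real.mul_rpow ht.le hq0.le, hKdef, hadef]
        ring


theorem distWeight_memAp_of_neg [Nontrivial X]
    (μ : Measure X) (hballs : BallsPosFinite μ) (hdbl : Doubling μ)
    (E : Set X) (hE : E.Nonempty) (hEc : IsClosed E)
    (α p : ℝ) (hα : α < 0) (hp : 1 < p)
    (hcodim : α / (1 - p) < assouadCodim μ E) :
    MemAp μ (distWeight E α) p := by
  classical
  obtain ⟨CD, hCD0, hdb⟩ := hdbl
  obtain ⟨x₀, hx₀⟩ := hE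
  have hCD1 : 1 ≤ CD := by
    by_contra hlt
    push_neg at hlt
    have h1 := hdb x₀ 1 one_pos
    have hb1 := hballs x₀ 1 one_pos
    have h2 : μ (ball x₀ 1) ≤ μ (ball x₀ (2*1)) :=
      measure_mono (ball_subset_ball (by norm_num))
    have h3 : ENNReal.ofReal CD * μ (ball x₀ 1) < 1 * μ (ball x₀ 1) := by
      rw [ENNReal.mul_lt_mul_iff_left hb1.1.ne' hb1.2.ne]
      exact ENNReal.ofReal_lt_one.mpr hlt
    rw [one_mul] at h3
    exact absurd (le_trans h2 h1) (not_le.mpr h3)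
  have hp1 : 0 < p - 1 := by linarith
  have hnα : 0 < -α := by linarith
  set γ : ℝ := α / (p - 1) with hγdef
  have hγ0 : γ < 0 := div_neg_of_neg_of_pos hα hp1
  set β : ℝ := -γ with hβdef
  have hβ0 : 0 < β := neg_pos.mpr hγ0
  have hγβ : -β = γ := by rw [hβdef, neg_neg]
  have hβeq : α / (1 - p) = β := by
    rw [hβdef, hγdef, show (1:ℝ) - p = -(p-1) by ring, div_neg]
  rw [hβeq] at hcodim
  have hSne : (assouadCodimBddSet μ E).Nonempty := by
    by_contra h
    rw [not_nonempty_iff_eq_empty] at h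
    rw [assouadCodim, h, Real.sSup_empty] at hcodim
    linarith
  obtain ⟨ρ, hρS, hβρ⟩ := exists_lt_of_lt_csSup hSne hcodim
  obtain ⟨hρ0, C, hC1, hcod⟩ := hρS
  have hC0 : 0 < C := lt_of_lt_of_le one_pos hC1
  have hρpos : 0 < ρ := lt_trans hβ0 hβρ
  have hEnull : μ E = 0 := null_E μ hballs E ⟨x₀, hx₀⟩ hρpos hC0 hcod
  obtain ⟨C', hC'0, hAik⟩ := aikawa μ E ⟨x₀, hx₀⟩ hEc hEnull hβ0 hβρ hC0 hcod
  have hw : ∀ y : X, distWeight E α y = ENNReal.ofReal (infDist y E) ^ (-α) := fun y => rfl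
  have hw' : ∀ y : X,
      distWeight E α y ^ (-(1/(p-1))) = ENNReal.ofReal (infDist y E) ^ γ := by
    intro y
    rw [hw, ← ENNReal.rpow_mul]
    congr 1
    rw [hγdef]
    field_simp
  set K₁ : ℝ := max ((3/2 : ℝ) ^ (-α)) 1 with hK₁def
  set K₂ : ℝ := max ((1/2 : ℝ) ^ γ) (C' * CD^3) with hK₂def
  have hK₁0 : 0 < K₁ := lt_of_lt_of_le one_pos (le_max_right _ _)
  have hK₂0 : 0 < K₂ := lt_of_lt_of_le (by positivity) (le_max_right _ _)
  -- the key per-ball estimates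
  have key : ∀ (x : X) (r : ℝ), 0 < r → ∃ s : ℝ, 0 < s ∧
      (∫⁻ y in ball x r, ENNReal.ofReal (infDist y E) ^ (-α) ∂μ ≤
        ENNReal.ofReal (K₁ * s ^ (-α)) * μ (ball x r)) ∧
      (∫⁻ y in ball x r, ENNReal.ofReal (infDist y E) ^ γ ∂μ ≤
        ENNReal.ofReal (K₂ * s ^ γ) * μ (ball x r)) := by
    intro x r hr
    by_cases hfar : 2 * r ≤ infDist x E
    · -- ball far from E
      have hd0 : 0 < infDist x E := lt_of_lt_of_le (by linarith) hfar
      refine ⟨infDist x E, hd0, ?_, ?_⟩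
      · refine setLIntegral_le_of_bound' μ _ _ _ (fun y hy => ?_)
        have h1 : infDist y E ≤ (3/2) * infDist x E := by
          have ht := infDist_le_infDist_add_dist (x := y) (y := x) (s := E)
          have hyx : dist y x < r := mem_ball.mp hy
          linarith
        refine le_trans (ofReal_rpow_le_pos hnα (by positivity) h1)
          (ENNReal.ofReal_le_ofReal ?_)
        rw [Real.mul_rpow (by norm_num) hd0.le]
        exact mul_le_mul_of_nonneg_right (le_max_left _ _) (Real.rpow_nonneg hd0.le _)
      · refine setLIntegral_le_of_bound' μ _ _ _ (fun y hy => ?_)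
        have h1 : (1/2) * infDist x E ≤ infDist y E := by
          have ht := infDist_le_infDist_add_dist (x := x) (y := y) (s := E)
          have hyx : dist x y < r := mem_ball'.mp hy
          linarith
        refine le_trans (ofReal_rpow_le_neg hγ0 (by positivity) h1)
          (ENNReal.ofReal_le_ofReal ?_)
        rw [Real.mul_rpow (by norm_num) hd0.le]
        exact mul_le_mul_of_nonneg_right (le_max_left _ _) (Real.rpow_nonneg hd0.le _)
    · push_neg at hfar
      obtain ⟨x₁, hx₁E, hxx₁⟩ := (infDist_lt_iff ⟨x₀, hx₀⟩).mp hfar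
      by_cases hrd : ENNReal.ofReal (3*r) < 2 * EMetric.diam (univ : Set X)
      · -- small ball near E
        refine ⟨3*r, by linarith, ?_, ?_⟩
        · refine setLIntegral_le_of_bound' μ _ _ _ (fun y hy => ?_)
          have h1 : infDist y E ≤ 3*r := by
            have ht := infDist_le_dist_of_mem (x := y) hx₁E
            have h2 : dist y x₁ ≤ dist y x + dist x x₁ := dist_triangle _ _ _
            have hyx : dist y x < r := mem_ball.mp hy
            linarith
          refine le_trans (ofReal_rpow_le_pos hnα (by linarith) h1)
            (ENNReal.ofReal_le_ofReal ?_)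
          exact le_mul_of_one_le_left (Real.rpow_nonneg (by linarith) _) (le_max_right _ _)
        · have hsub : ball x r ⊆ ball x₁ (3*r) := by
            intro y hy
            rw [mem_ball] at hy ⊢
            have h2 : dist y x₁ ≤ dist y x + dist x x₁ := dist_triangle _ _ _
            linarith
          have hsub2 : ball x₁ (3*r) ⊆ ball x (8*r) := by
            intro y hy
            rw [mem_ball] at hy ⊢
            have h2 : dist y x ≤ dist y x₁ + dist x₁ x := dist_triangle _ _ _
            have h3 : dist x₁ x = dist x x₁ := dist_comm _ _
            linarith
          calc ∫⁻ y in ball x r, ENNReal.ofReal (infDist y E) ^ γ ∂μ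
              ≤ ∫⁻ y in ball x₁ (3*r), ENNReal.ofReal (infDist y E) ^ γ ∂μ :=
                lintegral_mono_set hsub
            _ = ∫⁻ y in ball x₁ (3*r), ENNReal.ofReal (infDist y E) ^ (-β) ∂μ := by
                rw [hγβ]
            _ ≤ ENNReal.ofReal (C' * (3*r) ^ (-β)) * μ (ball x₁ (3*r)) :=
                hAik x₁ hx₁E (3*r) (by linarith) hrd
            _ ≤ ENNReal.ofReal (C' * (3*r) ^ (-β)) * μ (ball x (8*r)) :=
                mul_le_mul_right (measure_mono hsub2) _
            _ ≤ ENNReal.ofReal (C' * (3*r) ^ (-β)) *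
                (ENNReal.ofReal (CD^3) * μ (ball x r)) :=
                mul_le_mul_right (doubling_three μ hCD0 hdb x hr) _
            _ = ENNReal.ofReal (C' * (3*r) ^ (-β) * CD^3) * μ (ball x r) := by
                rw [← mul_assoc, ← ENNReal.ofReal_mul (by positivity)]
            _ ≤ ENNReal.ofReal (K₂ * (3*r) ^ γ) * μ (ball x r) := by
                refine mul_le_mul_left (ENNReal.ofReal_le_ofReal ?_) _
                rw [hγβ]
                calc C' * (3*r) ^ γ * CD^3 = (C' * CD^3) * (3*r) ^ γ := by ring
                  _ ≤ K₂ * (3*r) ^ γ :=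
                    mul_le_mul_of_nonneg_right (le_max_right _ _)
                      (Real.rpow_nonneg (by linarith) _)
      · -- large ball in a bounded space
        push_neg at hrd
        have hdiam : EMetric.diam (univ : Set X) ≠ ⊤ := by
          intro h
          rw [h, ENNReal.mul_top (by norm_num), top_le_iff] at hrd
          exact ENNReal.ofReal_ne_top hrd
        set D := (EMetric.diam (univ : Set X)).toReal with hDdef
        have hD0 : 0 < D := diam_pos hdiam
        have h2D : 2*D ≤ 3*r := by
          rw [two_mul_diam_eq hdiam] at hrd
          exact (ENNReal.ofReal_le_ofReal_iff (by linarith)).mp hrd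
        have hdist := dist_le_diam hdiam
        refine ⟨(3/2)*D, by linarith, ?_, ?_⟩
        · refine setLIntegral_le_of_bound' μ _ _ _ (fun y hy => ?_)
          have h1 : infDist y E ≤ (3/2)*D :=
            le_trans (infDist_le_dist_of_mem hx₁E) (le_trans (hdist y x₁) (by linarith))
          refine le_trans (ofReal_rpow_le_pos hnα (by linarith) h1)
            (ENNReal.ofReal_le_ofReal ?_)
          exact le_mul_of_one_le_left (Real.rpow_nonneg (by linarith) _) (le_max_right _ _)
        · have hμuniv : μ (univ : Set X) ≤ ENNReal.ofReal (CD^2) * μ (ball x r) := by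
            have huniv : (univ : Set X) ⊆ ball x (4*r) := fun y _ => by
              rw [mem_ball]
              exact lt_of_le_of_lt (hdist y x) (by linarith)
            exact le_trans (measure_mono huniv) (doubling_two μ hCD0 hdb x hr)
          have hsub : ball x r ⊆ ball x₁ ((3/2)*D) := fun y _ => by
            rw [mem_ball]
            exact lt_of_le_of_lt (hdist y x₁) (by linarith)
          have hadm : ENNReal.ofReal ((3/2)*D) < 2 * EMetric.diam (univ : Set X) := by
            rw [two_mul_diam_eq hdiam]
            exact (ENNReal.ofReal_lt_ofReal_iff (by linarith)).mpr (by linarith)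
          calc ∫⁻ y in ball x r, ENNReal.ofReal (infDist y E) ^ γ ∂μ
              ≤ ∫⁻ y in ball x₁ ((3/2)*D), ENNReal.ofReal (infDist y E) ^ γ ∂μ :=
                lintegral_mono_set hsub
            _ = ∫⁻ y in ball x₁ ((3/2)*D), ENNReal.ofReal (infDist y E) ^ (-β) ∂μ := by
                rw [hγβ]
            _ ≤ ENNReal.ofReal (C' * ((3/2)*D) ^ (-β)) * μ (ball x₁ ((3/2)*D)) :=
                hAik x₁ hx₁E _ (by linarith) hadm
            _ ≤ ENNReal.ofReal (C' * ((3/2)*D) ^ (-β)) * μ (univ : Set X) :=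
                mul_le_mul_right (measure_mono (subset_univ _)) _
            _ ≤ ENNReal.ofReal (C' * ((3/2)*D) ^ (-β)) *
                (ENNReal.ofReal (CD^2) * μ (ball x r)) := mul_le_mul_right hμuniv _
            _ = ENNReal.ofReal (C' * ((3/2)*D) ^ (-β) * CD^2) * μ (ball x r) := by
                rw [← mul_assoc, ← ENNReal.ofReal_mul (by positivity)]
            _ ≤ ENNReal.ofReal (K₂ * ((3/2)*D) ^ γ) * μ (ball x r) := by
                refine mul_le_mul_left (ENNReal.ofReal_le_ofReal ?_) _
                rw [hγβ]
                have hCD23 : CD^2 ≤ CD^3 := pow_le_pow_right₀ hCD1 (by norm_num)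
                calc C' * ((3/2)*D) ^ γ * CD^2 = (C' * CD^2) * ((3/2)*D) ^ γ := by ring
                  _ ≤ (C' * CD^3) * ((3/2)*D) ^ γ :=
                    mul_le_mul_of_nonneg_right
                      (mul_le_mul_of_nonneg_left hCD23 hC'0.le)
                      (Real.rpow_nonneg (by linarith) _)
                  _ ≤ K₂ * ((3/2)*D) ^ γ :=
                    mul_le_mul_of_nonneg_right (le_max_right _ _)
                      (Real.rpow_nonneg (by linarith) _)
  -- assemble the Ap condition
  refine ⟨⟨measurable_distW E (-α), ?_, ?_⟩, K₁ * K₂^(p-1), by positivity, ?_⟩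
  · -- a.e. positivity and finiteness
    have hsub : {z : X | ¬(0 < distWeight E α z ∧ distWeight E α z ≠ ∞)} ⊆ E := by
      intro z hz
      by_contra hzE
      apply hz
      have hd : 0 < infDist z E := (hEc.notMem_iff_infDist_pos ⟨x₀, hx₀⟩).mp hzE
      exact ⟨ENNReal.rpow_pos (ENNReal.ofReal_pos.mpr hd) ENNReal.ofReal_ne_top,
        ENNReal.rpow_ne_top_of_nonneg hnα.le ENNReal.ofReal_ne_top⟩
    rw [MeasureTheory.ae_iff]
    exact measure_mono_null hsub hEnull
  · -- local integrability
    intro x r hr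
    obtain ⟨s, hs, h1, _⟩ := key x r hr
    exact ne_top_of_le_ne_top
      (ENNReal.mul_ne_top ENNReal.ofReal_ne_top (hballs x r hr).2.ne) h1
  · -- the Ap estimate
    intro x r hr
    obtain ⟨s, hs, h1, h2⟩ := key x r hr
    have d1 : (∫⁻ y in ball x r, distWeight E α y ∂μ) / μ (ball x r) ≤
        ENNReal.ofReal (K₁ * s^(-α)) := ENNReal.div_le_of_le_mul h1
    have h2' : ∫⁻ y in ball x r, distWeight E α y ^ (-(1/(p-1))) ∂μ ≤
        ENNReal.ofReal (K₂ * s^γ) * μ (ball x r) := by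
      calc ∫⁻ y in ball x r, distWeight E α y ^ (-(1/(p-1))) ∂μ
          = ∫⁻ y in ball x r, ENNReal.ofReal (infDist y E) ^ γ ∂μ :=
            lintegral_congr (fun y => hw' y)
        _ ≤ ENNReal.ofReal (K₂ * s^γ) * μ (ball x r) := h2
    have d2 : (∫⁻ y in ball x r, distWeight E α y ^ (-(1/(p-1))) ∂μ) / μ (ball x r) ≤
        ENNReal.ofReal (K₂ * s^γ) := ENNReal.div_le_of_le_mul h2'
    calc (∫⁻ y in ball x r, distWeight E α y ∂μ) / μ (ball x r) *
          ((∫⁻ y in ball x r, distWeight E α y ^ (-(1/(p-1))) ∂μ) / μ (ball x r)) ^ (p-1)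
        ≤ ENNReal.ofReal (K₁ * s^(-α)) * (ENNReal.ofReal (K₂ * s^γ)) ^ (p-1) :=
          mul_le_mul' d1 (ENNReal.rpow_le_rpow d2 (by linarith))
      _ = ENNReal.ofReal ((K₁ * s^(-α)) * (K₂ * s^γ)^(p-1)) := by
          rw [ENNReal.ofReal_rpow_of_nonneg (by positivity) (by linarith),
            ← ENNReal.ofReal_mul (by positivity)]
      _ = ENNReal.ofReal (K₁ * K₂^(p-1)) := by
          congr 1
          rw [Real.mul_rpow hK₂0.le (Real.rpow_nonneg hs.le _), ← Real.rpow_mul hs.le]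
          have hγα : γ * (p-1) = α := by
            rw [hγdef]
            field_simp
          rw [hγα]
          have hss : s^(-α) * s^α = 1 := by
            rw [← Real.rpow_add hs]
            simp
          calc K₁ * s^(-α) * (K₂^(p-1) * s^α) = K₁ * K₂^(p-1) * (s^(-α) * s^α) := by ring
            _ = K₁ * K₂^(p-1) := by rw [hss, mul_one]


end
end ApDistance
end

section
/- Let ∅ ≠ E ⊂ X be a closed set. Then the lower Assouad codimension codim_A(E) equals the supremum of all exponents α ≥ 0 for which E satisfies the Aikawa condition with exponent α and some constant C ≥ 1. In particular, E satisfies the Aikawa condition for every exponent 0 ≤ α < codim_A(E). -/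
open MeasureTheory Metric Set Filter
open scoped ENNReal NNReal

namespace ApDistance

noncomputable section

variable {X : Type*} [MetricSpace X] [MeasurableSpace X] [BorelSpace X]

lemma aikawa_mem_codim (μ : Measure X) (E : Set X) {α C : ℝ} (hα : 0 ≤ α)
    (hC : 1 ≤ C) (hA : AikawaCondition μ E α C) : α ∈ assouadCodimBddSet μ E := by
  refine ⟨hα, C, hC, ?_⟩
  intro x hx r R hr hrR hRd
  have hR : 0 < R := hr.trans hrR
  have hA' := hA x hx R hR hRd
  set S := {y : X | infDist y E < r} ∩ ball x R with hS
  have hSm : MeasurableSet S :=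
    (((continuous_infDist_pt E).measurable (measurableSet_Iio (a := r)))).inter
      measurableSet_ball
  have hlow : ENNReal.ofReal (r ^ (-α)) * μ S ≤
      ∫⁻ y in ball x R, ENNReal.ofReal (infDist y E) ^ (-α) ∂μ := by
    calc ENNReal.ofReal (r ^ (-α)) * μ S
        = ∫⁻ _ in S, ENNReal.ofReal (r ^ (-α)) ∂μ := (setLIntegral_const _ _).symm
      _ ≤ ∫⁻ y in S, ENNReal.ofReal (infDist y E) ^ (-α) ∂μ := by
          refine setLIntegral_mono' hSm fun y hy => ?_
          rw [← ENNReal.ofReal_rpow_of_pos hr, ENNReal.rpow_neg, ENNReal.rpow_neg]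
          refine ENNReal.inv_le_inv.mpr (ENNReal.rpow_le_rpow ?_ hα)
          exact ENNReal.ofReal_le_ofReal hy.1.le
      _ ≤ ∫⁻ y in ball x R, ENNReal.ofReal (infDist y E) ^ (-α) ∂μ :=
          lintegral_mono_set inter_subset_right
  have hone : ENNReal.ofReal (r ^ α) * ENNReal.ofReal (r ^ (-α)) = 1 := by
    rw [← ENNReal.ofReal_mul (by positivity), ← Real.rpow_add hr]
    simp
  calc μ S = (ENNReal.ofReal (r ^ α) * ENNReal.ofReal (r ^ (-α))) * μ S := by
        rw [hone, one_mul]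
    _ = ENNReal.ofReal (r ^ α) * (ENNReal.ofReal (r ^ (-α)) * μ S) := by ring
    _ ≤ ENNReal.ofReal (r ^ α) * (ENNReal.ofReal (C * R ^ (-α)) * μ (ball x R)) := by
        exact mul_le_mul_right (hlow.trans hA') _
    _ = ENNReal.ofReal (r ^ α * (C * R ^ (-α))) * μ (ball x R) := by
        have h : ENNReal.ofReal (r ^ α * (C * R ^ (-α)))
            = ENNReal.ofReal (r ^ α) * ENNReal.ofReal (C * R ^ (-α)) :=
          ENNReal.ofReal_mul (by positivity)
        rw [h, mul_assoc]
    _ = ENNReal.ofReal (C * (r / R) ^ α) * μ (ball x R) := by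
        rw [Real.div_rpow hr.le hR.le, Real.rpow_neg hR.le]
        ring_nf

lemma codim_to_aikawa (μ : Measure X) (hballs : BallsPosFinite μ)
    (E : Set X) (hE : E.Nonempty) (hEc : IsClosed E)
    {α ρ C0 : ℝ} (hα : 0 ≤ α) (hαρ : α < ρ) (hC0 : 1 ≤ C0)
    (hcodim : ∀ x ∈ E, ∀ r R : ℝ, 0 < r → r < R →
      ENNReal.ofReal R < 2 * EMetric.diam (univ : Set X) →
      μ ({y : X | infDist y E < r} ∩ ball x R) ≤
        ENNReal.ofReal (C0 * (r / R) ^ ρ) * μ (ball x R)) :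
    ∃ C : ℝ, 1 ≤ C ∧ AikawaCondition μ E α C := by
  classical
  have hρ : 0 < ρ := lt_of_le_of_lt hα hαρ
  set q : ℝ := 1/2 with hqdef
  have hq0 : 0 < q := by norm_num
  have hq1 : q < 1 := by norm_num
  set κ : ℝ := q ^ (ρ - α) with hκdef
  have hκ0 : 0 < κ := Real.rpow_pos_of_pos hq0 _
  have hκ1 : κ < 1 := Real.rpow_lt_one hq0.le hq1 (by linarith)
  set C1 : ℝ := C0 * q ^ (-α) * (1 - κ)⁻¹ with hC1def
  refine ⟨max 1 C1, le_max_left _ _, ?_⟩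
  intro x hx r hr hr2
  set B := ball x r with hBdef
  have hμB : μ B ≠ ∞ := (hballs x r hr).2.ne
  have hBsub : ∀ y ∈ B, infDist y E < r := fun y hy =>
    lt_of_le_of_lt (infDist_le_dist_of_mem hx) hy
  set S : ℕ → Set X := fun n => {y : X | infDist y E < r * q ^ n} ∩ B with hSdef
  have hSm : ∀ n, MeasurableSet (S n) := fun n =>
    ((continuous_infDist_pt E).measurable measurableSet_Iio).inter measurableSet_ball
  have hμS : ∀ n, μ (S n) ≤ ENNReal.ofReal (C0 * ((q ^ n : ℝ)) ^ ρ) * μ B := by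
    intro n
    cases n with
    | zero =>
      simp only [pow_zero, Real.one_rpow, mul_one]
      calc μ (S 0) ≤ μ B := measure_mono inter_subset_right
        _ ≤ ENNReal.ofReal C0 * μ B := le_mul_of_one_le_left zero_le (by
            rw [← ENNReal.ofReal_one]; exact ENNReal.ofReal_le_ofReal hC0)
    | succ m =>
      have hlt : r * q ^ (m+1) < r := by
        nth_rewrite 2 [← mul_one r]
        exact mul_lt_mul_of_pos_left (pow_lt_one₀ hq0.le hq1 m.succ_ne_zero) hr
      have h := hcodim x hx (r * q ^ (m+1)) r (by positivity) hlt hr2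
      rw [mul_div_cancel_left₀ _ hr.ne'] at h
      exact h
  have hEnull : μ (E ∩ B) = 0 := by
    have hle : ∀ n : ℕ, μ (E ∩ B) ≤ ENNReal.ofReal (C0 * (q ^ ρ) ^ n) * μ B := by
      intro n
      have hsub : E ∩ B ⊆ S n := fun y hy =>
        ⟨by simp only [mem_setOf_eq, infDist_zero_of_mem hy.1]; positivity, hy.2⟩
      refine (measure_mono hsub).trans ((hμS n).trans_eq ?_)
      congr 2
      rw [← Real.rpow_natCast q n, ← Real.rpow_natCast (q ^ ρ) n,
        ← Real.rpow_mul hq0.le, ← Real.rpow_mul hq0.le, mul_comm ρ (n:ℝ)]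
    have htend : Tendsto (fun n : ℕ => ENNReal.ofReal (C0 * (q ^ ρ) ^ n) * μ B)
        atTop (nhds 0) := by
      have h1 : Tendsto (fun n : ℕ => C0 * (q ^ ρ) ^ n) atTop (nhds 0) := by
        simpa using (tendsto_pow_atTop_nhds_zero_of_lt_one
          (Real.rpow_nonneg hq0.le ρ) (Real.rpow_lt_one hq0.le hq1 hρ)).const_mul C0
      have h2 := ENNReal.Tendsto.mul_const (ENNReal.tendsto_ofReal h1) (Or.inr hμB)
      simpa using h2
    exact le_antisymm (ge_of_tendsto' htend hle) zero_le
  have hcover : B \ E ⊆ ⋃ n : ℕ, (S n \ S (n+1)) := by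
    intro y hy
    have hd0 : 0 < infDist y E := (hEc.notMem_iff_infDist_pos hE).mp hy.2
    have hdr : infDist y E < r := hBsub y hy.1
    have hex : ∃ n : ℕ, r * q ^ (n+1) ≤ infDist y E := by
      obtain ⟨n, hn⟩ := exists_pow_lt_of_lt_one (div_pos hd0 hr) hq1
      refine ⟨n, ?_⟩
      have h1 : r * q ^ (n+1) ≤ r * q ^ n :=
        mul_le_mul_of_nonneg_left (pow_le_pow_of_le_one hq0.le hq1.le (Nat.le_succ n)) hr.le
      have h2 : r * q ^ n < infDist y E := by
        have := (lt_div_iff₀ hr).mp hn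
        linarith [this, mul_comm (q ^ n) r]
      linarith
    obtain ⟨n, hspec, hmin⟩ : ∃ n : ℕ, r * q ^ (n+1) ≤ infDist y E ∧
        ∀ k < n, ¬ (r * q ^ (k+1) ≤ infDist y E) :=
      ⟨Nat.find hex, Nat.find_spec hex, fun k hk => Nat.find_min hex hk⟩
    refine mem_iUnion.mpr ⟨n, ⟨⟨?_, hy.1⟩, fun hc => absurd hspec (not_le.mpr hc.1)⟩⟩
    show infDist y E < r * q ^ n
    cases n with
    | zero => simpa using hdr
    | succ k => exact not_le.mp (hmin k (Nat.lt_succ_self k))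
  have key : ∀ n : ℕ, ∫⁻ y in S n \ S (n+1), ENNReal.ofReal (infDist y E) ^ (-α) ∂μ ≤
      ENNReal.ofReal ((r * q ^ (n+1)) ^ (-α) * (C0 * ((q ^ n : ℝ)) ^ ρ)) * μ B := by
    intro n
    have ht0 : (0:ℝ) < r * q ^ (n+1) := by positivity
    calc ∫⁻ y in S n \ S (n+1), ENNReal.ofReal (infDist y E) ^ (-α) ∂μ
        ≤ ∫⁻ _ in S n \ S (n+1), ENNReal.ofReal ((r * q ^ (n+1)) ^ (-α)) ∂μ := by
          refine setLIntegral_mono' ((hSm n).diff (hSm (n+1))) fun y hy => ?_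
          have hge : r * q ^ (n+1) ≤ infDist y E := by
            by_contra hcon
            push_neg at hcon
            exact hy.2 ⟨hcon, hy.1.2⟩
          rw [← ENNReal.ofReal_rpow_of_pos ht0, ENNReal.rpow_neg, ENNReal.rpow_neg]
          exact ENNReal.inv_le_inv.mpr
            (ENNReal.rpow_le_rpow (ENNReal.ofReal_le_ofReal hge) hα)
      _ = ENNReal.ofReal ((r * q ^ (n+1)) ^ (-α)) * μ (S n \ S (n+1)) :=
          setLIntegral_const _ _
      _ ≤ ENNReal.ofReal ((r * q ^ (n+1)) ^ (-α)) *
          (ENNReal.ofReal (C0 * ((q ^ n : ℝ)) ^ ρ) * μ B) :=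
          mul_le_mul_right ((measure_mono diff_subset).trans (hμS n)) _
      _ = _ := by rw [← mul_assoc, ← ENNReal.ofReal_mul (by positivity)]
  have hcn : ∀ n : ℕ, (r * q ^ (n+1)) ^ (-α) * (C0 * ((q ^ n : ℝ)) ^ ρ)
      = (C0 * q ^ (-α) * r ^ (-α)) * κ ^ n := by
    intro n
    have e1 : ((q : ℝ) ^ (n+1)) ^ (-α) = q ^ ((((n:ℝ))+1) * (-α)) := by
      rw [← Real.rpow_natCast q (n+1), ← Real.rpow_mul hq0.le]
      push_cast; ring_nf
    have e2 : ((q : ℝ) ^ n) ^ ρ = q ^ ((n:ℝ) * ρ) := by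
      rw [← Real.rpow_natCast q n, ← Real.rpow_mul hq0.le]
    have key2 : (((n:ℝ))+1) * (-α) + (n:ℝ) * ρ = (-α) + (ρ - α) * (n:ℝ) := by ring
    calc (r * q ^ (n+1)) ^ (-α) * (C0 * ((q ^ n : ℝ)) ^ ρ)
        = r ^ (-α) * (q ^ ((((n:ℝ))+1) * (-α)) * (C0 * q ^ ((n:ℝ) * ρ))) := by
          rw [Real.mul_rpow hr.le (by positivity), e1, e2]; ring
      _ = C0 * r ^ (-α) * q ^ ((((n:ℝ))+1) * (-α) + (n:ℝ) * ρ) := by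
          rw [Real.rpow_add hq0]; ring
      _ = C0 * r ^ (-α) * q ^ ((-α) + (ρ - α) * (n:ℝ)) := by rw [key2]
      _ = (C0 * q ^ (-α) * r ^ (-α)) * κ ^ n := by
          rw [Real.rpow_add hq0, hκdef, Real.rpow_mul hq0.le, Real.rpow_natCast]; ring
  have hsum : (∑' n : ℕ, ENNReal.ofReal ((r * q ^ (n+1)) ^ (-α) * (C0 * ((q ^ n : ℝ)) ^ ρ)))
      ≤ ENNReal.ofReal (max 1 C1 * r ^ (-α)) := by
    have hsummable : Summable (fun n : ℕ => (C0 * q ^ (-α) * r ^ (-α)) * κ ^ n) :=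
      (summable_geometric_of_lt_one hκ0.le hκ1).mul_left _
    calc (∑' n : ℕ, ENNReal.ofReal ((r * q ^ (n+1)) ^ (-α) * (C0 * ((q ^ n : ℝ)) ^ ρ)))
        = ∑' n : ℕ, ENNReal.ofReal ((C0 * q ^ (-α) * r ^ (-α)) * κ ^ n) := by
          exact tsum_congr fun n => by rw [hcn n]
      _ = ENNReal.ofReal (∑' n : ℕ, (C0 * q ^ (-α) * r ^ (-α)) * κ ^ n) :=
          (ENNReal.ofReal_tsum_of_nonneg (fun n => by positivity) hsummable).symm
      _ = ENNReal.ofReal ((C0 * q ^ (-α) * r ^ (-α)) * (1 - κ)⁻¹) := by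
          rw [tsum_mul_left, tsum_geometric_of_lt_one hκ0.le hκ1]
      _ = ENNReal.ofReal (C1 * r ^ (-α)) := by rw [hC1def]; ring_nf
      _ ≤ ENNReal.ofReal (max 1 C1 * r ^ (-α)) :=
          ENNReal.ofReal_le_ofReal
            (mul_le_mul_of_nonneg_right (le_max_right 1 C1) (by positivity))
  calc ∫⁻ y in B, ENNReal.ofReal (infDist y E) ^ (-α) ∂μ
      ≤ ∫⁻ y in (E ∩ B) ∪ (B \ E), ENNReal.ofReal (infDist y E) ^ (-α) ∂μ := by
        refine lintegral_mono_set fun y hy => ?_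
        by_cases h : y ∈ E
        · exact Or.inl ⟨h, hy⟩
        · exact Or.inr ⟨hy, h⟩
    _ ≤ (∫⁻ y in E ∩ B, ENNReal.ofReal (infDist y E) ^ (-α) ∂μ) +
        ∫⁻ y in B \ E, ENNReal.ofReal (infDist y E) ^ (-α) ∂μ :=
        lintegral_union_le _ _ _
    _ = ∫⁻ y in B \ E, ENNReal.ofReal (infDist y E) ^ (-α) ∂μ := by
        rw [setLIntegral_measure_zero _ _ hEnull, zero_add]
    _ ≤ ∫⁻ y in ⋃ n : ℕ, (S n \ S (n+1)), ENNReal.ofReal (infDist y E) ^ (-α) ∂μ :=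
        lintegral_mono_set hcover
    _ ≤ ∑' n : ℕ, ∫⁻ y in S n \ S (n+1), ENNReal.ofReal (infDist y E) ^ (-α) ∂μ :=
        lintegral_iUnion_le _ _
    _ ≤ ∑' n : ℕ, ENNReal.ofReal ((r * q ^ (n+1)) ^ (-α) * (C0 * ((q ^ n : ℝ)) ^ ρ)) * μ B :=
        ENNReal.tsum_le_tsum key
    _ = (∑' n : ℕ, ENNReal.ofReal ((r * q ^ (n+1)) ^ (-α) * (C0 * ((q ^ n : ℝ)) ^ ρ))) * μ B :=
        ENNReal.tsum_mul_right
    _ ≤ ENNReal.ofReal (max 1 C1 * r ^ (-α)) * μ B := mul_le_mul_left hsum _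

theorem codim_eq_sSup_aikawa [Nontrivial X]
    (μ : Measure X) (hballs : BallsPosFinite μ) (hdbl : Doubling μ)
    (E : Set X) (hE : E.Nonempty) (hEc : IsClosed E) :
    assouadCodim μ E =
      sSup {α : ℝ | 0 ≤ α ∧ ∃ C : ℝ, 1 ≤ C ∧ AikawaCondition μ E α C} ∧
    ∀ α : ℝ, 0 ≤ α → α < assouadCodim μ E → ∃ C : ℝ, 1 ≤ C ∧ AikawaCondition μ E α C := by
  set A := {α : ℝ | 0 ≤ α ∧ ∃ C : ℝ, 1 ≤ C ∧ AikawaCondition μ E α C} with hAdef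
  have hsub : A ⊆ assouadCodimBddSet μ E := by
    rintro α ⟨hα, C, hC, hAik⟩
    exact aikawa_mem_codim μ E hα hC hAik
  have h0A : (0:ℝ) ∈ A := by
    refine ⟨le_refl 0, 1, le_refl 1, ?_⟩
    intro x hx r hr hr2
    simp only [neg_zero, ENNReal.rpow_zero, Real.rpow_zero, mul_one,
      ENNReal.ofReal_one, one_mul]
    rw [setLIntegral_one]
  have h0C : (0:ℝ) ∈ assouadCodimBddSet μ E := hsub h0A
  have hmain : ∀ α : ℝ, 0 ≤ α → (∃ ρ ∈ assouadCodimBddSet μ E, α < ρ) → α ∈ A := by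
    rintro α hα ⟨ρ, ⟨hρ0, C0, hC0, hcodim⟩, hαρ⟩
    obtain ⟨C, hC, hAik⟩ := codim_to_aikawa μ hballs E hE hEc hα hαρ hC0 hcodim
    exact ⟨hα, C, hC, hAik⟩
  constructor
  · show sSup (assouadCodimBddSet μ E) = sSup A
    by_cases hbdd : BddAbove (assouadCodimBddSet μ E)
    · have hbddA : BddAbove A := hbdd.mono hsub
      refine le_antisymm ?_ (csSup_le_csSup hbdd ⟨0, h0A⟩ hsub)
      by_contra hcon
      push_neg at hcon
      obtain ⟨ρ, hρmem, hρgt⟩ := exists_lt_of_lt_csSup ⟨0, h0C⟩ hcon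
      have hα0 : 0 ≤ sSup A := le_csSup hbddA h0A
      have hmem := hmain ((sSup A + ρ)/2) (by linarith) ⟨ρ, hρmem, by linarith⟩
      have := le_csSup hbddA hmem
      linarith
    · have hbddA : ¬ BddAbove A := by
        rintro ⟨b, hb⟩
        rw [not_bddAbove_iff] at hbdd
        obtain ⟨ρ, hρmem, hρgt⟩ := hbdd (max b 0)
        have h1 : 0 ≤ max b 0 := le_max_right b 0
        have hmem := hmain ((max b 0 + ρ)/2) (by linarith) ⟨ρ, hρmem, by linarith⟩
        have := hb hmem
        have h2 : b ≤ max b 0 := le_max_left b 0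
        linarith
      rw [Real.sSup_of_not_bddAbove hbdd, Real.sSup_of_not_bddAbove hbddA]
  · intro α hα hlt
    rw [assouadCodim] at hlt
    have hbdd : BddAbove (assouadCodimBddSet μ E) := by
      by_contra h
      rw [Real.sSup_of_not_bddAbove h] at hlt
      linarith
    obtain ⟨ρ, hρmem, hρgt⟩ := exists_lt_of_lt_csSup ⟨0, h0C⟩ hlt
    obtain ⟨hα', C, hC, hAik⟩ := hmain α hα ⟨ρ, hρmem, hρgt⟩
    exact ⟨C, hC, hAik⟩


end
end ApDistance
end

section
/- Let 0 < s < 1. Assume the standing assumptions, that X satisfies the 1-chain condition, and that μ satisfies the reverse doubling condition with exponent η = s. Let 1 ≤ t < ∞. Then there is a constant C > 0 such that for every f ∈ Lip_0(X) and every x ∈ X one has |f(x)| ≤ C·I_s(g)(x), where g(y) = (∫_X |f(y)−f(z)|^t / (d(y,z)^{st} μ(B(y,d(y,z)))) dμ(z))^{1/t} for y ∈ X, and C is independent of f and x. -/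
open MeasureTheory Metric Set
open scoped ENNReal NNReal

namespace ApDistance

noncomputable section

variable {X : Type*} [MetricSpace X] [MeasurableSpace X] [BorelSpace X]

private lemma doubling_pow {μ : Measure X} {CD : ℝ}
    (h : DoublingWith μ CD) (x : X) {r : ℝ} (hr : 0 < r) (n : ℕ) :
    μ (ball x (2^n * r)) ≤ (ENNReal.ofReal CD)^n * μ (ball x r) := by
  induction n with
  | zero => simp
  | succ n ih =>
    have h1 : (2:ℝ)^(n+1) * r = 2 * (2^n * r) := by ring
    have h2 := h x (2^n * r) (by positivity)
    rw [h1]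
    calc μ (ball x (2 * (2^n*r))) ≤ ENNReal.ofReal CD * μ (ball x (2^n*r)) := h2
      _ ≤ ENNReal.ofReal CD * ((ENNReal.ofReal CD)^n * μ (ball x r)) := by
          exact mul_le_mul_right ih _
      _ = (ENNReal.ofReal CD)^(n+1) * μ (ball x r) := by ring

private lemma doubling_scale {μ : Measure X} {CD : ℝ}
    (h : DoublingWith μ CD) {a : ℝ} (x : X) {r : ℝ} (hr : 0 < r) {n : ℕ} (ha : a ≤ 2^n) :
    μ (ball x (a * r)) ≤ (ENNReal.ofReal CD)^n * μ (ball x r) := by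
  refine le_trans (measure_mono (ball_subset_ball ?_)) (doubling_pow h x hr n)
  exact mul_le_mul_of_nonneg_right ha hr.le

/-- Jensen: L¹ average is at most Lᵗ average, over a ball of positive finite measure. -/
private lemma avg_le_rpow_avg {μ : Measure X} {B : Set X} (hB0 : μ B ≠ 0) (hBt : μ B ≠ ∞)
    {φ : X → ℝ≥0∞} (hφ : Measurable φ) {t : ℝ} (ht : 1 ≤ t) :
    (μ B)⁻¹ * ∫⁻ z in B, φ z ∂μ ≤ ((μ B)⁻¹ * ∫⁻ z in B, (φ z) ^ t ∂μ) ^ (1/t) := by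
  rcases eq_or_lt_of_le ht with h1 | h1
  · simp [← h1, ENNReal.rpow_one]
  have hpq : t.HolderConjugate (t/(t-1)) := Real.HolderConjugate.conjExponent h1
  have hone : AEMeasurable (fun _ : X => (1:ℝ≥0∞)) (μ.restrict B) := aemeasurable_const
  have hH := ENNReal.lintegral_mul_le_Lp_mul_Lq (μ.restrict B) hpq hφ.aemeasurable hone
  simp only [Pi.mul_apply, mul_one, ENNReal.one_rpow, lintegral_const,
    Measure.restrict_apply MeasurableSet.univ, univ_inter] at hH
  -- hH : ∫⁻ φ ≤ (∫⁻ φ^t)^(1/t) * (1 * μ B)^(1/(t/(t-1)))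
  rw [one_mul] at hH
  have ht0 : (0:ℝ) < t := lt_trans zero_lt_one h1
  have hmuB : (μ B) ^ (1/(t/(t-1))) = (μ B) ^ (1 - 1/t) := by
    congr 1
    field_simp
  rw [hmuB] at hH
  set A := ∫⁻ z in B, (φ z)^t ∂μ with hA
  calc (μ B)⁻¹ * ∫⁻ z in B, φ z ∂μ ≤ (μ B)⁻¹ * (A ^ (1/t) * (μ B) ^ (1 - 1/t)) :=
        mul_le_mul_right hH _
    _ = ((μ B) ^ (-(1:ℝ)) * (μ B) ^ (1 - 1/t)) * A ^ (1/t) := by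
        rw [ENNReal.rpow_neg_one]; ring
    _ = (μ B) ^ (-(1/t)) * A ^ (1/t) := by
        rw [← ENNReal.rpow_add _ _ hB0 hBt]; congr 1; ring
    _ = ((μ B)⁻¹ * A) ^ (1/t) := by
        rw [ENNReal.mul_rpow_of_nonneg _ _ (by positivity : (0:ℝ) ≤ 1/t),
          ← ENNReal.rpow_neg_one, ← ENNReal.rpow_mul]
        norm_num


private lemma integrable_on_ball {μ : Measure X} (hballs : BallsPosFinite μ)
    {f : X → ℝ} (hf : Continuous f) {Cf : ℝ} (hCf : ∀ y, |f y| ≤ Cf)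
    (c : X) (ρ : ℝ) : Integrable f (μ.restrict (ball c ρ)) := by
  rcases le_or_gt ρ 0 with h | h
  · rw [ball_eq_empty.mpr h, Measure.restrict_empty]
    exact integrable_zero_measure
  · have hfin : Integrable (fun _ : X => Cf) (μ.restrict (ball c ρ)) := by
      refine integrable_const_iff.mpr (Or.inr ?_)
      refine ⟨?_⟩; rw [Measure.restrict_apply_univ]
      exact (hballs c ρ h).2
    exact hfin.mono' hf.aestronglyMeasurable (ae_of_all _ fun y => by
      simpa [Real.norm_eq_abs] using hCf y)

private lemma ball_estimate
    {μ : Measure X} (hballs : BallsPosFinite μ) {CD : ℝ} (hCD : 1 ≤ CD)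
    (hdw : DoublingWith μ CD) (hatom : ∀ x : X, μ {x} = 0)
    {s t : ℝ} (hs0 : 0 < s) (ht : 1 ≤ t)
    {f : X → ℝ} (hf : Continuous f) {Cf : ℝ} (hCf : ∀ y, |f y| ≤ Cf)
    {M : ℝ} (hM : 1 ≤ M) {n : ℕ} (hn : 4*M + 6 ≤ 2^n)
    (x c : X) {ρ : ℝ} (hρ : 0 < ρ)
    (hB1 : M⁻¹ * Metric.diam (ball c ρ) ≤ infDist x (ball c ρ))
    (hB2 : infDist x (ball c ρ) ≤ M * Metric.diam (ball c ρ)) :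
    (μ (ball c ρ))⁻¹ * ∫⁻ y in ball c ρ,
        ENNReal.ofReal |f y - (μ (ball c ρ)).toReal⁻¹ * ∫ z in ball c ρ, f z ∂μ| ∂μ
      ≤ ENNReal.ofReal (M ^ s) * (ENNReal.ofReal CD)^(n+2) *
        ∫⁻ y in ball c ρ, (fracEnergyKernel μ s t f y) ^ (1/t) *
          ENNReal.ofReal (dist x y ^ s) / μ (ball x (dist x y)) ∂μ := by
  have ht0 : (0:ℝ) < t := lt_of_lt_of_le zero_lt_one ht
  have hst : (0:ℝ) ≤ s * t := by positivity
  set B := ball c ρ with hB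
  have hm0 : μ B ≠ 0 := (hballs c ρ hρ).1.ne'
  have hmtop : μ B ≠ ∞ := (hballs c ρ hρ).2.ne
  set D := Metric.diam B with hDdef
  have hD2 : D ≤ 2 * ρ := diam_ball hρ.le
  have hDpos : 0 < D := by
    rcases lt_or_ge 0 D with h | h
    · exact h
    · exfalso
      have hsub : B ⊆ {c} := by
        intro y hy
        have := dist_le_diam_of_mem isBounded_ball hy (mem_ball_self hρ)
        have : dist y c = 0 := le_antisymm (this.trans h) dist_nonneg
        simpa [dist_eq_zero] using this
      exact hm0 (le_antisymm ((measure_mono hsub).trans (hatom c).le) (by simp))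
  have hMpos : (0:ℝ) < M := lt_of_lt_of_le zero_lt_one hM
  have hinf : 0 < infDist x B := lt_of_lt_of_le (by positivity) hB1
  have hCD1 : (1:ℝ≥0∞) ≤ ENNReal.ofReal CD := by
    rw [ENNReal.one_le_ofReal]; exact hCD
  set fB : ℝ := (μ B).toReal⁻¹ * ∫ z in B, f z ∂μ with hfB
  set G : X → ℝ≥0∞ := fun y => (fracEnergyKernel μ s t f y) ^ (1/t) with hG
  have htR : (μ B).toReal ≠ 0 := ENNReal.toReal_ne_zero.mpr ⟨hm0, hmtop⟩
  have htRpos : 0 < (μ B).toReal := ENNReal.toReal_pos hm0 hmtop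
  -- Step A : pointwise Poincaré-type estimate
  have hA : ∀ y ∈ B, ENNReal.ofReal |f y - fB| ≤
      ENNReal.ofReal (D ^ s) * (ENNReal.ofReal CD)^2 * G y := by
    intro y hyB
    -- a4 pointwise : the kernel bound
    have ha4pt : ∀ z ∈ B, ENNReal.ofReal (|f y - f z| ^ t) ≤
        (ENNReal.ofReal (D ^ (s*t)) * ((ENNReal.ofReal CD)^2 * μ B)) *
          (ENNReal.ofReal (|f y - f z| ^ t) /
            (ENNReal.ofReal (dist y z ^ (s * t)) * μ (ball y (dist y z)))) := by
      intro z hzB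
      rcases eq_or_ne y z with rfl | hyz
      · simp [Real.zero_rpow ht0.ne']
      · have hd : 0 < dist y z := dist_pos.mpr hyz
        set denom := ENNReal.ofReal (dist y z ^ (s * t)) * μ (ball y (dist y z)) with hdenom
        have hden0 : denom ≠ 0 := by
          apply mul_ne_zero
          · exact (ENNReal.ofReal_pos.mpr (Real.rpow_pos_of_pos hd (s*t))).ne'
          · exact (hballs y (dist y z) hd).1.ne'
        have hdent : denom ≠ ∞ :=
          ENNReal.mul_ne_top ENNReal.ofReal_ne_top (hballs y (dist y z) hd).2.ne
        have hdz : dist y z ≤ D := dist_le_diam_of_mem isBounded_ball hyB hzB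
        have hdenle : denom ≤ ENNReal.ofReal (D ^ (s*t)) * ((ENNReal.ofReal CD)^2 * μ B) := by
          apply mul_le_mul'
          · exact ENNReal.ofReal_le_ofReal (Real.rpow_le_rpow hd.le hdz hst)
          · have hsub : ball y (dist y z) ⊆ ball c (4 * ρ) := by
              intro w hw
              have h1 : dist w c ≤ dist w y + dist y c := dist_triangle w y c
              have h2 : dist w y < dist y z := by simpa [dist_comm] using hw
              have h3 : dist y c < ρ := hyB
              have : dist w c < D + ρ := by
                have := hdz; linarith
              calc dist w c < D + ρ := this
                _ ≤ 2*ρ + ρ := by linarith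
                _ < 4 * ρ := by linarith
            calc μ (ball y (dist y z)) ≤ μ (ball c (4 * ρ)) := measure_mono hsub
              _ ≤ (ENNReal.ofReal CD)^2 * μ (ball c ρ) :=
                  doubling_scale hdw c hρ (by norm_num)
        calc ENNReal.ofReal (|f y - f z| ^ t)
            = ENNReal.ofReal (|f y - f z| ^ t) / denom * denom :=
              (ENNReal.div_mul_cancel hden0 hdent).symm
          _ ≤ ENNReal.ofReal (|f y - f z| ^ t) / denom *
              (ENNReal.ofReal (D ^ (s*t)) * ((ENNReal.ofReal CD)^2 * μ B)) :=
              mul_le_mul_right hdenle _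
          _ = _ := by rw [mul_comm]
    -- a4 : integrated kernel bound
    have ha4 : ∫⁻ z in B, ENNReal.ofReal (|f y - f z| ^ t) ∂μ ≤
        (ENNReal.ofReal (D ^ (s*t)) * ((ENNReal.ofReal CD)^2 * μ B)) *
          fracEnergyKernel μ s t f y := by
      calc ∫⁻ z in B, ENNReal.ofReal (|f y - f z| ^ t) ∂μ
          ≤ ∫⁻ z in B, (ENNReal.ofReal (D ^ (s*t)) * ((ENNReal.ofReal CD)^2 * μ B)) *
            (ENNReal.ofReal (|f y - f z| ^ t) /
              (ENNReal.ofReal (dist y z ^ (s * t)) * μ (ball y (dist y z)))) ∂μ :=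
            setLIntegral_mono' measurableSet_ball ha4pt
        _ = (ENNReal.ofReal (D ^ (s*t)) * ((ENNReal.ofReal CD)^2 * μ B)) *
            ∫⁻ z in B, ENNReal.ofReal (|f y - f z| ^ t) /
              (ENNReal.ofReal (dist y z ^ (s * t)) * μ (ball y (dist y z))) ∂μ :=
            lintegral_const_mul' _ _ (by
              exact ENNReal.mul_ne_top ENNReal.ofReal_ne_top
                (ENNReal.mul_ne_top (ENNReal.pow_ne_top ENNReal.ofReal_ne_top) hmtop))
        _ ≤ _ := mul_le_mul_right (setLIntegral_le_lintegral _ _) _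
    -- a1 : real average inequality
    have hfint : Integrable f (μ.restrict B) := integrable_on_ball hballs hf hCf c ρ
    have hconst : Integrable (fun _ : X => f y) (μ.restrict B) := by
      refine integrable_const_iff.mpr (Or.inr ?_)
      refine ⟨?_⟩; rw [Measure.restrict_apply_univ]
      exact hmtop.lt_top
    have hsubint : Integrable (fun z => f y - f z) (μ.restrict B) := hconst.sub hfint
    have hint_eq : ∫ z in B, (f y - f z) ∂μ = (μ B).toReal * f y - ∫ z in B, f z ∂μ := by
      rw [integral_sub hconst hfint, setIntegral_const, smul_eq_mul, measureReal_def]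
    have ha1 : |f y - fB| ≤ (μ B).toReal⁻¹ * ∫ z in B, |f y - f z| ∂μ := by
      have heq : f y - fB = (μ B).toReal⁻¹ * ∫ z in B, (f y - f z) ∂μ := by
        rw [hint_eq, hfB]
        field_simp
      rw [heq, abs_mul, abs_of_nonneg (inv_nonneg.mpr ENNReal.toReal_nonneg)]
      refine mul_le_mul_of_nonneg_left ?_ (inv_nonneg.mpr ENNReal.toReal_nonneg)
      calc |∫ z in B, (f y - f z) ∂μ| = ‖∫ z in B, (f y - f z) ∂μ‖ := (Real.norm_eq_abs _).symm
        _ ≤ ∫ z in B, ‖f y - f z‖ ∂μ := norm_integral_le_integral_norm _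
        _ = ∫ z in B, |f y - f z| ∂μ := by simp [Real.norm_eq_abs]
    -- a2 : pass to lintegral
    have hofinv : ENNReal.ofReal (μ B).toReal⁻¹ = (μ B)⁻¹ := by
      rw [ENNReal.ofReal_inv_of_pos htRpos, ENNReal.ofReal_toReal hmtop]
    have ha2 : ENNReal.ofReal |f y - fB| ≤
        (μ B)⁻¹ * ∫⁻ z in B, ENNReal.ofReal |f y - f z| ∂μ := by
      calc ENNReal.ofReal |f y - fB|
          ≤ ENNReal.ofReal ((μ B).toReal⁻¹ * ∫ z in B, |f y - f z| ∂μ) :=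
            ENNReal.ofReal_le_ofReal ha1
        _ = ENNReal.ofReal (μ B).toReal⁻¹ * ENNReal.ofReal (∫ z in B, |f y - f z| ∂μ) :=
            ENNReal.ofReal_mul (inv_nonneg.mpr ENNReal.toReal_nonneg)
        _ = (μ B)⁻¹ * ∫⁻ z in B, ENNReal.ofReal |f y - f z| ∂μ := by
            rw [hofinv, ofReal_integral_eq_lintegral_ofReal hsubint.abs
              (ae_of_all _ fun z => abs_nonneg _)]
    -- a3 : Jensen
    have hφ : Measurable (fun z => ENNReal.ofReal |f y - f z|) :=
      ((continuous_const.sub hf).abs.measurable).ennreal_ofReal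
    have ha3 := avg_le_rpow_avg (μ := μ) (B := B) hm0 hmtop hφ ht
    -- rewrite φ^t
    have hφt : ∀ z : X, (ENNReal.ofReal |f y - f z|) ^ t = ENNReal.ofReal (|f y - f z| ^ t) :=
      fun z => ENNReal.ofReal_rpow_of_nonneg (abs_nonneg _) ht0.le
    rw [funext hφt] at ha3
    have h1t0 : (0:ℝ) ≤ 1/t := by positivity
    have h1t1 : 1/t ≤ 1 := by rw [div_le_one ht0]; exact ht
    calc ENNReal.ofReal |f y - fB|
        ≤ (μ B)⁻¹ * ∫⁻ z in B, ENNReal.ofReal |f y - f z| ∂μ := ha2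
      _ ≤ ((μ B)⁻¹ * ∫⁻ z in B, ENNReal.ofReal (|f y - f z| ^ t) ∂μ) ^ (1/t) := ha3
      _ ≤ ((μ B)⁻¹ * (ENNReal.ofReal (D ^ (s*t)) * ((ENNReal.ofReal CD)^2 * μ B) *
            fracEnergyKernel μ s t f y)) ^ (1/t) :=
          ENNReal.rpow_le_rpow (mul_le_mul_right ha4 _) h1t0
      _ = (ENNReal.ofReal (D ^ (s*t)) * (ENNReal.ofReal CD)^2 *
            fracEnergyKernel μ s t f y) ^ (1/t) := by
          congr 1
          have : (μ B)⁻¹ * (ENNReal.ofReal (D ^ (s*t)) * ((ENNReal.ofReal CD)^2 * μ B) *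
              fracEnergyKernel μ s t f y) =
              (ENNReal.ofReal (D ^ (s*t)) * (ENNReal.ofReal CD)^2 *
              fracEnergyKernel μ s t f y) * ((μ B)⁻¹ * μ B) := by ring
          rw [this, ENNReal.inv_mul_cancel hm0 hmtop, mul_one]
      _ ≤ ENNReal.ofReal (D ^ s) * (ENNReal.ofReal CD)^2 * G y := by
          rw [ENNReal.mul_rpow_of_nonneg _ _ h1t0, ENNReal.mul_rpow_of_nonneg _ _ h1t0]
          have e1 : (ENNReal.ofReal (D ^ (s*t))) ^ (1/t) = ENNReal.ofReal (D ^ s) := by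
            rw [ENNReal.ofReal_rpow_of_nonneg (Real.rpow_nonneg hDpos.le _) h1t0]
            congr 1
            rw [← Real.rpow_mul hDpos.le]
            congr 1
            field_simp
          have e2 : ((ENNReal.ofReal CD)^2 : ℝ≥0∞) ^ (1/t) ≤ (ENNReal.ofReal CD)^2 := by
            calc ((ENNReal.ofReal CD)^2 : ℝ≥0∞) ^ (1/t)
                ≤ ((ENNReal.ofReal CD)^2 : ℝ≥0∞) ^ (1:ℝ) :=
                  ENNReal.rpow_le_rpow_of_exponent_le (one_le_pow_of_one_le' hCD1 2) h1t1
              _ = (ENNReal.ofReal CD)^2 := ENNReal.rpow_one _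
          rw [e1]
          exact mul_le_mul' (mul_le_mul' le_rfl e2) le_rfl
  -- Step B : integrate over the ball and compare with the Riesz kernel
  have hpt : ∀ y ∈ B, (μ B)⁻¹ * ENNReal.ofReal |f y - fB| ≤
      ENNReal.ofReal (M^s) * (ENNReal.ofReal CD)^(n+2) *
        (G y * ENNReal.ofReal (dist x y ^ s) / μ (ball x (dist x y))) := by
    intro y hyB
    have hd0 : 0 < dist x y := lt_of_lt_of_le hinf (infDist_le_dist_of_mem (x := x) hyB)
    have hbd0 : μ (ball x (dist x y)) ≠ 0 := (hballs x (dist x y) hd0).1.ne'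
    have hbdt : μ (ball x (dist x y)) ≠ ∞ := (hballs x (dist x y) hd0).2.ne
    have hxc : dist x c ≤ (M+1) * D := by
      have h1 : dist x c ≤ infDist x B + D :=
        dist_le_infDist_add_diam isBounded_ball (mem_ball_self hρ)
      nlinarith [hB2]
    have hdle : dist x y ≤ (M+2) * D := by
      have h1 : dist x y ≤ dist x c + dist c y := dist_triangle x c y
      have h2 : dist c y ≤ D := dist_le_diam_of_mem isBounded_ball (mem_ball_self hρ) hyB
      linarith
    have hsub : ball x (dist x y) ⊆ ball c ((4*M+6) * ρ) := by
      intro w hw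
      have h1 : dist w c ≤ dist w x + dist x c := dist_triangle w x c
      have h2 : dist w x < dist x y := mem_ball.mp hw
      have h3 : dist w c < (2*M+3) * D := by nlinarith
      have h4 : (2*M+3) * D ≤ (2*M+3) * (2*ρ) := by nlinarith
      calc dist w c < (2*M+3)*D := h3
        _ ≤ (2*M+3)*(2*ρ) := h4
        _ = (4*M+6)*ρ := by ring
    have hball : μ (ball x (dist x y)) ≤ (ENNReal.ofReal CD)^n * μ B :=
      (measure_mono hsub).trans (doubling_scale hdw c hρ hn)
    have hinvle : (μ B)⁻¹ ≤ (ENNReal.ofReal CD)^n * (μ (ball x (dist x y)))⁻¹ := by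
      rw [← div_eq_mul_inv, ENNReal.le_div_iff_mul_le (Or.inl hbd0) (Or.inl hbdt)]
      calc (μ B)⁻¹ * μ (ball x (dist x y))
          ≤ (μ B)⁻¹ * ((ENNReal.ofReal CD)^n * μ B) := mul_le_mul_right hball _
        _ = (ENNReal.ofReal CD)^n * ((μ B)⁻¹ * μ B) := by ring
        _ = (ENNReal.ofReal CD)^n := by rw [ENNReal.inv_mul_cancel hm0 hmtop, mul_one]
    have hDs : ENNReal.ofReal (D^s) ≤ ENNReal.ofReal (M^s) * ENNReal.ofReal (dist x y ^ s) := by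
      rw [← ENNReal.ofReal_mul (Real.rpow_nonneg hMpos.le s)]
      apply ENNReal.ofReal_le_ofReal
      rw [← Real.mul_rpow hMpos.le dist_nonneg]
      apply Real.rpow_le_rpow hDpos.le ?_ hs0.le
      have h5 := infDist_le_dist_of_mem (x := x) hyB
      have h6 : M⁻¹ * D ≤ dist x y := hB1.trans h5
      calc D = M * (M⁻¹ * D) := by field_simp
        _ ≤ M * dist x y := by nlinarith
    calc (μ B)⁻¹ * ENNReal.ofReal |f y - fB|
        ≤ (μ B)⁻¹ * (ENNReal.ofReal (D ^ s) * (ENNReal.ofReal CD)^2 * G y) :=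
          mul_le_mul_right (hA y hyB) _
      _ = ENNReal.ofReal (D ^ s) * (ENNReal.ofReal CD)^2 * (μ B)⁻¹ * G y := by ring
      _ ≤ (ENNReal.ofReal (M^s) * ENNReal.ofReal (dist x y ^ s)) * (ENNReal.ofReal CD)^2 *
            ((ENNReal.ofReal CD)^n * (μ (ball x (dist x y)))⁻¹) * G y := by
          exact mul_le_mul_left (mul_le_mul' (mul_le_mul_left hDs _) hinvle) _
      _ = ENNReal.ofReal (M^s) * (ENNReal.ofReal CD)^(n+2) *
            (G y * ENNReal.ofReal (dist x y ^ s) * (μ (ball x (dist x y)))⁻¹) := by ring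
      _ = ENNReal.ofReal (M^s) * (ENNReal.ofReal CD)^(n+2) *
            (G y * ENNReal.ofReal (dist x y ^ s) / μ (ball x (dist x y))) := by
          rw [div_eq_mul_inv]
  calc (μ B)⁻¹ * ∫⁻ y in B, ENNReal.ofReal |f y - fB| ∂μ
      = ∫⁻ y in B, (μ B)⁻¹ * ENNReal.ofReal |f y - fB| ∂μ :=
        (lintegral_const_mul' _ _ (ENNReal.inv_ne_top.mpr hm0)).symm
    _ ≤ ∫⁻ y in B, ENNReal.ofReal (M^s) * (ENNReal.ofReal CD)^(n+2) *
          (G y * ENNReal.ofReal (dist x y ^ s) / μ (ball x (dist x y))) ∂μ :=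
        setLIntegral_mono' measurableSet_ball hpt
    _ = ENNReal.ofReal (M^s) * (ENNReal.ofReal CD)^(n+2) *
          ∫⁻ y in B, G y * ENNReal.ofReal (dist x y ^ s) / μ (ball x (dist x y)) ∂μ :=
        lintegral_const_mul' _ _
          (ENNReal.mul_ne_top ENNReal.ofReal_ne_top (ENNReal.pow_ne_top ENNReal.ofReal_ne_top))

private lemma sum_lintegral_le {μ : Measure X} (s : Finset ℕ) (F : ℕ → X → ℝ≥0∞) :
    ∑ i ∈ s, ∫⁻ a, F i a ∂μ ≤ ∫⁻ a, ∑ i ∈ s, F i a ∂μ := by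
  classical
  induction s using Finset.induction_on with
  | empty => simp
  | insert j s' hni ih =>
    rw [Finset.sum_insert hni]
    calc ∫⁻ a, F j a ∂μ + ∑ i ∈ s', ∫⁻ a, F i a ∂μ
        ≤ ∫⁻ a, F j a ∂μ + ∫⁻ a, ∑ i ∈ s', F i a ∂μ := add_le_add_right ih _
      _ ≤ ∫⁻ a, (F j a + ∑ i ∈ s', F i a) ∂μ := le_lintegral_add _ _
      _ = ∫⁻ a, ∑ i ∈ insert j s', F i a ∂μ := by
          congr 1; ext a; rw [Finset.sum_insert hni]


theorem abs_le_rieszPotential_fracEnergy [Nontrivial X]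
    (μ : Measure X) (s : ℝ) (hs0 : 0 < s) (hs1 : s < 1)
    (hsa : StandingAssumptions μ) (hballs : BallsPosFinite μ) (hdbl : Doubling μ)
    (hchain : ChainCondition X 1) (hrev : ReverseDoubling μ s)
    (t : ℝ) (ht : 1 ≤ t) :
    ∃ C : ℝ, 0 < C ∧ ∀ f : X → ℝ, MemLip0 f → ∀ x : X,
      ENNReal.ofReal |f x| ≤
        ENNReal.ofReal C *
          rieszPotential μ s (fun y => fracEnergyKernel μ s t f y ^ (1 / t)) x := by
  classical
  obtain ⟨CD0, hCD0, hdw0⟩ := hdbl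
  set CD : ℝ := max CD0 1 with hCDdef
  have hCD : 1 ≤ CD := le_max_right _ _
  have hCD0' : 0 ≤ CD := by linarith
  have hdw : DoublingWith μ CD := fun y r hr =>
    (hdw0 y r hr).trans (mul_le_mul_left (ENNReal.ofReal_le_ofReal (le_max_left _ _)) _)
  obtain ⟨M, hM, hch⟩ := hchain
  have hMpos : (0:ℝ) < M := lt_of_lt_of_le zero_lt_one hM
  obtain ⟨n, hn⟩ : ∃ n : ℕ, 4*M + 6 ≤ 2^n := by
    obtain ⟨n, hn⟩ := pow_unbounded_of_one_lt (4*M+6) (one_lt_two (α := ℝ))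
    exact ⟨n, hn.le⟩
  have hMn : M ≤ 2^n := by linarith
  have hatom : ∀ y : X, μ {y} = 0 := hsa.2.1
  have hMs : (0:ℝ) < M ^ s := Real.rpow_pos_of_pos hMpos s
  refine ⟨2 * M * M^s * CD^(2*n+2), by positivity, ?_⟩
  intro f hmem x
  obtain ⟨⟨K, hK⟩, ⟨x0, r0, hsupp⟩⟩ := hmem
  have hf : Continuous f := hK.continuous
  set r0' : ℝ := max r0 1 with hr0'def
  have hr0' : 0 < r0' := lt_of_lt_of_le zero_lt_one (le_max_right _ _)
  -- a global bound for |f|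
  obtain ⟨w, hw⟩ := hsa.2.2 x0 r0' (2*r0') hr0' (by linarith)
  have hfw : f w = 0 := by
    apply hsupp
    intro hmemw
    exact hw.2 (ball_subset_ball (le_max_left r0 1) hmemw)
  have hCf : ∀ y, |f y| ≤ (K:ℝ) * (3 * r0') := by
    intro y
    by_cases hy : y ∈ ball x0 r0
    · have h1 : dist y x0 < r0' := lt_of_lt_of_le hy (le_max_left _ _)
      have h2 : dist x0 w < 2*r0' := by
        have := hw.1; simpa [dist_comm] using this
      have h3 : dist y w ≤ dist y x0 + dist x0 w := dist_triangle _ _ _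
      have h4 : |f y - f w| ≤ (K:ℝ) * dist y w := by
        have := hK.dist_le_mul y w
        simpa [Real.dist_eq] using this
      have h5 : |f y| ≤ (K:ℝ) * dist y w := by rw [← sub_zero (f y), ← hfw]; exact h4
      calc |f y| ≤ (K:ℝ) * dist y w := h5
        _ ≤ (K:ℝ) * (3 * r0') := by
            have : (0:ℝ) ≤ (K:ℝ) := K.coe_nonneg
            nlinarith
    · rw [hsupp y hy]
      have : (0:ℝ) ≤ (K:ℝ) := K.coe_nonneg
      simp only [abs_zero]
      positivity
  set R : ℝ := dist x x0 + r0' + 1 with hRdef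
  have hR : 0 < R := by positivity
  set G : X → ℝ≥0∞ := fun y => fracEnergyKernel μ s t f y ^ (1/t) with hG
  set riesz : ℝ≥0∞ := rieszPotential μ s G x with hriesz
  set Hh : X → ℝ≥0∞ :=
    fun y => G y * ENNReal.ofReal (dist x y ^ s) / μ (ball x (dist x y)) with hHh
  have hrieszint : riesz = ∫⁻ y, Hh y ∂μ := rfl
  -- the key estimate for every small r
  have key : ∀ r : ℝ, 0 < r → r < R →
      ENNReal.ofReal |f x| ≤ ENNReal.ofReal ((K:ℝ) * r) +
        ENNReal.ofReal (2 * M * M^s * CD^(2*n+2)) * riesz := by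
    intro r hr hrR
    obtain ⟨k, c, ρ, hρpos, h0, hk, hBp, hOv, hCnt⟩ := hch x r R hr hrR
    simp only [one_mul] at h0 hk hBp hCnt
    set Bi : ℕ → Set X := fun i => ball (c i) (ρ i) with hBi
    set m : ℕ → ℝ≥0∞ := fun i => μ (Bi i) with hm
    have hm0 : ∀ i ≤ k, m i ≠ 0 := fun i hi => (hballs (c i) (ρ i) (hρpos i hi)).1.ne'
    have hmtop : ∀ i ≤ k, m i ≠ ∞ := fun i hi => (hballs (c i) (ρ i) (hρpos i hi)).2.ne
    set fav : ℕ → ℝ := fun i => (m i).toReal⁻¹ * ∫ z in Bi i, f z ∂μ with hfav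
    set T : ℕ → ℝ≥0∞ := fun i => ∫⁻ y in Bi i, Hh y ∂μ with hT
    set E : ℕ → ℝ≥0∞ := fun i => ∫⁻ y in Bi i, ENNReal.ofReal |f y - fav i| ∂μ with hE
    -- per-ball estimate
    have hball_est : ∀ i ≤ k, (m i)⁻¹ * E i ≤
        ENNReal.ofReal (M^s) * (ENNReal.ofReal CD)^(n+2) * T i := by
      intro i hi
      have := ball_estimate hballs hCD hdw hatom hs0 ht hf hCf hM hn x (c i)
        (hρpos i hi) (hBp i hi).1 (hBp i hi).2
      exact this
    -- integrability facts
    have hintf : ∀ (c' : X) (ρ' : ℝ), Integrable f (μ.restrict (ball c' ρ')) :=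
      fun c' ρ' => integrable_on_ball hballs hf hCf c' ρ'
    -- chain-link estimate
    have hlink : ∀ i < k, ENNReal.ofReal |fav (i+1) - fav i| ≤
        (ENNReal.ofReal CD)^n * (ENNReal.ofReal (M^s) * (ENNReal.ofReal CD)^(n+2)) *
          (T i + T (i+1)) := by
      intro i hi
      obtain ⟨z, τ, hτ, hsubS, hsupS⟩ := hOv i hi
      have hik : i ≤ k := hi.le
      have hik1 : i + 1 ≤ k := hi
      have hS0 : μ (ball z τ) ≠ 0 := (hballs z τ hτ).1.ne'
      have hSt : μ (ball z τ) ≠ ∞ := (hballs z τ hτ).2.ne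
      have hStR : (μ (ball z τ)).toReal ≠ 0 := ENNReal.toReal_ne_zero.mpr ⟨hS0, hSt⟩
      have hStRpos : 0 < (μ (ball z τ)).toReal := ENNReal.toReal_pos hS0 hSt
      -- real estimate for each of the two balls
      have hdiff : ∀ j, j ≤ k → ball z τ ⊆ Bi j →
          |fav j - (μ (ball z τ)).toReal⁻¹ * ∫ z' in ball z τ, f z' ∂μ| ≤
            (μ (ball z τ)).toReal⁻¹ * ∫ y in Bi j, |f y - fav j| ∂μ := by
        intro j hj hsubj
        have hfintS : Integrable f (μ.restrict (ball z τ)) := hintf z τ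
        have hconstS : Integrable (fun _ : X => fav j) (μ.restrict (ball z τ)) := by
          refine integrable_const_iff.mpr (Or.inr ?_)
          refine ⟨?_⟩; rw [Measure.restrict_apply_univ]; exact hSt.lt_top
        have heq : fav j - (μ (ball z τ)).toReal⁻¹ * ∫ z' in ball z τ, f z' ∂μ =
            (μ (ball z τ)).toReal⁻¹ * ∫ z' in ball z τ, (fav j - f z') ∂μ := by
          rw [integral_sub hconstS hfintS, setIntegral_const, smul_eq_mul, measureReal_def]
          field_simp
        rw [heq, abs_mul, abs_of_nonneg (inv_nonneg.mpr ENNReal.toReal_nonneg)]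
        refine mul_le_mul_of_nonneg_left ?_ (inv_nonneg.mpr ENNReal.toReal_nonneg)
        have h1 : |∫ z' in ball z τ, (fav j - f z') ∂μ| ≤
            ∫ z' in ball z τ, |fav j - f z'| ∂μ := by
          calc |∫ z' in ball z τ, (fav j - f z') ∂μ|
              = ‖∫ z' in ball z τ, (fav j - f z') ∂μ‖ := (Real.norm_eq_abs _).symm
            _ ≤ ∫ z' in ball z τ, ‖fav j - f z'‖ ∂μ := norm_integral_le_integral_norm _
            _ = ∫ z' in ball z τ, |fav j - f z'| ∂μ := by simp [Real.norm_eq_abs]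
        refine h1.trans ?_
        have h2 : ∀ z' : X, |fav j - f z'| = |f z' - fav j| := fun z' => abs_sub_comm _ _
        rw [funext h2]
        have hconstj : Integrable (fun _ : X => fav j) (μ.restrict (Bi j)) := by
          refine integrable_const_iff.mpr (Or.inr ?_)
          refine ⟨?_⟩; rw [Measure.restrict_apply_univ]; exact (hmtop j hj).lt_top
        have habs : IntegrableOn (fun y => |f y - fav j|) (Bi j) μ :=
          ((hintf (c j) (ρ j)).sub hconstj).abs
        exact setIntegral_mono_set habs (ae_of_all _ fun y => abs_nonneg _)
          (HasSubset.Subset.eventuallyLE hsubj)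
      -- pass to ENNReal
      have hEof : ∀ j, j ≤ k → ENNReal.ofReal (∫ y in Bi j, |f y - fav j| ∂μ) = E j := by
        intro j hj
        have hconstj : Integrable (fun _ : X => fav j) (μ.restrict (Bi j)) := by
          refine integrable_const_iff.mpr (Or.inr ?_)
          refine ⟨?_⟩; rw [Measure.restrict_apply_univ]; exact (hmtop j hj).lt_top
        exact ofReal_integral_eq_lintegral_ofReal ((hintf (c j) (ρ j)).sub hconstj).abs
          (ae_of_all _ fun y => abs_nonneg _)
      have hofinvS : ENNReal.ofReal (μ (ball z τ)).toReal⁻¹ = (μ (ball z τ))⁻¹ := by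
        rw [ENNReal.ofReal_inv_of_pos hStRpos, ENNReal.ofReal_toReal hSt]
      have hsub1 : ball z τ ⊆ Bi i := fun y hy => (hsubS hy).1
      have hsub2 : ball z τ ⊆ Bi (i+1) := fun y hy => (hsubS hy).2
      have hreal : |fav (i+1) - fav i| ≤ (μ (ball z τ)).toReal⁻¹ *
          (∫ y in Bi i, |f y - fav i| ∂μ + ∫ y in Bi (i+1), |f y - fav (i+1)| ∂μ) := by
        set fS : ℝ := (μ (ball z τ)).toReal⁻¹ * ∫ u in ball z τ, f u ∂μ with hfS
        have h1 := hdiff i hik hsub1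
        have h2 := hdiff (i+1) hik1 hsub2
        have h3 : |fav (i+1) - fav i| ≤ |fav i - fS| + |fav (i+1) - fS| := by
          calc |fav (i+1) - fav i| = |(fav (i+1) - fS) - (fav i - fS)| := by ring_nf
            _ ≤ |fav (i+1) - fS| + |fav i - fS| := abs_sub _ _
            _ = |fav i - fS| + |fav (i+1) - fS| := by ring
        calc |fav (i+1) - fav i| ≤ |fav i - fS| + |fav (i+1) - fS| := h3
          _ ≤ (μ (ball z τ)).toReal⁻¹ * ∫ y in Bi i, |f y - fav i| ∂μ +
              (μ (ball z τ)).toReal⁻¹ * ∫ y in Bi (i+1), |f y - fav (i+1)| ∂μ :=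
              add_le_add h1 h2
          _ = _ := by ring
      -- measure comparison
      have hcomp : ∀ j, j ≤ k → Bi j ⊆ ball z (M * τ) →
          (μ (ball z τ))⁻¹ * E j ≤ (ENNReal.ofReal CD)^n * ((m j)⁻¹ * E j) := by
        intro j hj hsubMj
        have hmj : m j ≤ (ENNReal.ofReal CD)^n * μ (ball z τ) :=
          (measure_mono hsubMj).trans (doubling_scale hdw z hτ hMn)
        have hinvle : (μ (ball z τ))⁻¹ ≤ (ENNReal.ofReal CD)^n * (m j)⁻¹ := by
          rw [← div_eq_mul_inv, ENNReal.le_div_iff_mul_le (Or.inl (hm0 j hj))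
            (Or.inl (hmtop j hj))]
          calc (μ (ball z τ))⁻¹ * m j
              ≤ (μ (ball z τ))⁻¹ * ((ENNReal.ofReal CD)^n * μ (ball z τ)) :=
                mul_le_mul_right hmj _
            _ = (ENNReal.ofReal CD)^n * ((μ (ball z τ))⁻¹ * μ (ball z τ)) := by ring
            _ = (ENNReal.ofReal CD)^n := by rw [ENNReal.inv_mul_cancel hS0 hSt, mul_one]
        calc (μ (ball z τ))⁻¹ * E j ≤ ((ENNReal.ofReal CD)^n * (m j)⁻¹) * E j :=
              mul_le_mul_left hinvle _
          _ = (ENNReal.ofReal CD)^n * ((m j)⁻¹ * E j) := by ring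
      have hsubM1 : Bi i ⊆ ball z (M * τ) := fun y hy => hsupS (Or.inl hy)
      have hsubM2 : Bi (i+1) ⊆ ball z (M * τ) := fun y hy => hsupS (Or.inr hy)
      calc ENNReal.ofReal |fav (i+1) - fav i|
          ≤ ENNReal.ofReal ((μ (ball z τ)).toReal⁻¹ *
            (∫ y in Bi i, |f y - fav i| ∂μ + ∫ y in Bi (i+1), |f y - fav (i+1)| ∂μ)) :=
            ENNReal.ofReal_le_ofReal hreal
        _ = (μ (ball z τ))⁻¹ * ENNReal.ofReal
            (∫ y in Bi i, |f y - fav i| ∂μ + ∫ y in Bi (i+1), |f y - fav (i+1)| ∂μ) := by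
            rw [ENNReal.ofReal_mul (inv_nonneg.mpr ENNReal.toReal_nonneg), hofinvS]
        _ ≤ (μ (ball z τ))⁻¹ * (E i + E (i+1)) := by
            refine mul_le_mul_right ?_ _
            refine (ENNReal.ofReal_add_le).trans ?_
            rw [hEof i hik, hEof (i+1) hik1]
        _ = (μ (ball z τ))⁻¹ * E i + (μ (ball z τ))⁻¹ * E (i+1) := by ring
        _ ≤ (ENNReal.ofReal CD)^n * ((m i)⁻¹ * E i) +
            (ENNReal.ofReal CD)^n * ((m (i+1))⁻¹ * E (i+1)) :=
            add_le_add (hcomp i hik hsubM1) (hcomp (i+1) hik1 hsubM2)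
        _ ≤ (ENNReal.ofReal CD)^n *
              (ENNReal.ofReal (M^s) * (ENNReal.ofReal CD)^(n+2) * T i) +
            (ENNReal.ofReal CD)^n *
              (ENNReal.ofReal (M^s) * (ENNReal.ofReal CD)^(n+2) * T (i+1)) :=
            add_le_add (mul_le_mul_right (hball_est i hik) _)
              (mul_le_mul_right (hball_est (i+1) hik1) _)
        _ = (ENNReal.ofReal CD)^n * (ENNReal.ofReal (M^s) * (ENNReal.ofReal CD)^(n+2)) *
              (T i + T (i+1)) := by ring
    -- endpoint k
    have hmk0 : (m k).toReal ≠ 0 :=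
      ENNReal.toReal_ne_zero.mpr ⟨hm0 k le_rfl, hmtop k le_rfl⟩
    have hendk : |f x - fav k| ≤ (K:ℝ) * r := by
      have hconstk : Integrable (fun _ : X => f x) (μ.restrict (Bi k)) := by
        refine integrable_const_iff.mpr (Or.inr ?_)
        refine ⟨?_⟩; rw [Measure.restrict_apply_univ]; exact (hmtop k le_rfl).lt_top
      have heq : f x - fav k = (m k).toReal⁻¹ * ∫ u in Bi k, (f x - f u) ∂μ := by
        rw [integral_sub hconstk (hintf (c k) (ρ k)), setIntegral_const, smul_eq_mul, measureReal_def]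
        simp only [hfav]
        field_simp
        ring
      rw [heq, abs_mul, abs_of_nonneg (inv_nonneg.mpr ENNReal.toReal_nonneg)]
      have h1 : |∫ u in Bi k, (f x - f u) ∂μ| ≤ ∫ u in Bi k, |f x - f u| ∂μ := by
        calc |∫ u in Bi k, (f x - f u) ∂μ| = ‖∫ u in Bi k, (f x - f u) ∂μ‖ :=
              (Real.norm_eq_abs _).symm
          _ ≤ ∫ u in Bi k, ‖f x - f u‖ ∂μ := norm_integral_le_integral_norm _
          _ = ∫ u in Bi k, |f x - f u| ∂μ := by simp [Real.norm_eq_abs]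
      have hKr0 : (0:ℝ) ≤ (K:ℝ) := K.coe_nonneg
      have h2 : ∫ u in Bi k, |f x - f u| ∂μ ≤ ∫ _u in Bi k, (K:ℝ) * r ∂μ := by
        refine setIntegral_mono_on ((hconstk.sub (hintf (c k) (ρ k))).abs) ?_
          measurableSet_ball ?_
        · refine integrable_const_iff.mpr (Or.inr ?_)
          refine ⟨?_⟩; rw [Measure.restrict_apply_univ]; exact (hmtop k le_rfl).lt_top
        · intro u hu
          have hur : u ∈ ball x r := hk hu
          have hud : dist x u < r := by simpa [dist_comm] using hur
          calc |f x - f u| ≤ (K:ℝ) * dist x u := by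
                have := hK.dist_le_mul x u
                simpa [Real.dist_eq] using this
            _ ≤ (K:ℝ) * r := by nlinarith
      have h3 : ∫ _u in Bi k, (K:ℝ) * r ∂μ = (m k).toReal * ((K:ℝ) * r) := by
        rw [setIntegral_const, smul_eq_mul, measureReal_def]
      calc (m k).toReal⁻¹ * |∫ u in Bi k, (f x - f u) ∂μ|
          ≤ (m k).toReal⁻¹ * ((m k).toReal * ((K:ℝ) * r)) := by
            refine mul_le_mul_of_nonneg_left ?_ (inv_nonneg.mpr ENNReal.toReal_nonneg)
            rw [← h3]; exact h1.trans h2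
        _ = (K:ℝ) * r := by field_simp
    -- endpoint 0
    have hend0 : fav 0 = 0 := by
      have hzero : ∀ y ∈ Bi 0, f y = 0 := by
        intro y hy
        apply hsupp
        intro hmem0
        have hyR : y ∈ ball x R := by
          have h1 : dist y x0 < r0 := hmem0
          have h2 : dist y x ≤ dist y x0 + dist x0 x := dist_triangle _ _ _
          have h3 : r0 ≤ r0' := le_max_left _ _
          have h4 : dist x0 x = dist x x0 := dist_comm _ _
          have : dist y x < R := by
            rw [hRdef]; nlinarith
          exact mem_ball.mpr this
        exact (h0 hy) hyR
      have hintzero : ∫ u in Bi 0, f u ∂μ = 0 := by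
        rw [setIntegral_congr_fun measurableSet_ball hzero, integral_zero]
      rw [hfav]; simp [hintzero]
    -- telescoping
    have htel : |fav k| ≤ ∑ i ∈ Finset.range k, |fav (i+1) - fav i| := by
      have h1 : fav k - fav 0 = ∑ i ∈ Finset.range k, (fav (i+1) - fav i) :=
        (Finset.sum_range_sub fav k).symm
      calc |fav k| = |fav k - fav 0| := by rw [hend0, sub_zero]
        _ = |∑ i ∈ Finset.range k, (fav (i+1) - fav i)| := by rw [h1]
        _ ≤ ∑ i ∈ Finset.range k, |fav (i+1) - fav i| := Finset.abs_sum_le_sum_abs _ _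
    -- bounded overlap
    have hoverlap : ∑ i ∈ Finset.range (k+1), T i ≤ ENNReal.ofReal M * riesz := by
      have hTi : ∀ i, T i = ∫⁻ y, (Bi i).indicator Hh y ∂μ := by
        intro i
        rw [lintegral_indicator measurableSet_ball]
      calc ∑ i ∈ Finset.range (k+1), T i
          = ∑ i ∈ Finset.range (k+1), ∫⁻ y, (Bi i).indicator Hh y ∂μ :=
            Finset.sum_congr rfl fun i _ => hTi i
        _ ≤ ∫⁻ y, ∑ i ∈ Finset.range (k+1), (Bi i).indicator Hh y ∂μ :=
            sum_lintegral_le _ _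
        _ ≤ ∫⁻ y, ENNReal.ofReal M * Hh y ∂μ := by
            refine lintegral_mono fun y => ?_
            have hcard : ∑ i ∈ Finset.range (k+1), (Bi i).indicator Hh y =
                (((Finset.range (k+1)).filter (fun i => y ∈ Bi i)).card : ℝ≥0∞) * Hh y := by
              rw [Finset.sum_indicator_eq_sum_filter, Finset.sum_const, nsmul_eq_mul]
            rw [hcard]
            refine mul_le_mul_left ?_ _
            have hsetEq : (((Finset.range (k+1)).filter (fun i => y ∈ Bi i)) : Set ℕ) =
                {i : ℕ | i ≤ k ∧ y ∈ ball (c i) (ρ i)} := by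
              ext i
              simp [Nat.lt_succ_iff, hBi]
            have hncard := hCnt y
            rw [← hsetEq, Set.ncard_coe_finset] at hncard
            rw [← ENNReal.ofReal_natCast]
            exact ENNReal.ofReal_le_ofReal hncard
        _ = ENNReal.ofReal M * riesz := by
            rw [lintegral_const_mul' _ _ ENNReal.ofReal_ne_top, hrieszint]
    -- assemble
    have hconst_eq : (ENNReal.ofReal CD)^n *
        (ENNReal.ofReal (M^s) * (ENNReal.ofReal CD)^(n+2)) * (2 * ENNReal.ofReal M) =
        ENNReal.ofReal (2 * M * M^s * CD^(2*n+2)) := by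
      rw [ENNReal.ofReal_mul (by positivity), ENNReal.ofReal_mul (by positivity),
        ENNReal.ofReal_mul (by positivity), ENNReal.ofReal_pow hCD0',
        ENNReal.ofReal_ofNat]
      ring
    calc ENNReal.ofReal |f x|
        ≤ ENNReal.ofReal (|f x - fav k| + |fav k|) := by
          refine ENNReal.ofReal_le_ofReal ?_
          calc |f x| = |(f x - fav k) + fav k| := by ring_nf
            _ ≤ |f x - fav k| + |fav k| := abs_add_le _ _
      _ ≤ ENNReal.ofReal |f x - fav k| + ENNReal.ofReal |fav k| := ENNReal.ofReal_add_le
      _ ≤ ENNReal.ofReal ((K:ℝ) * r) +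
          ∑ i ∈ Finset.range k, ENNReal.ofReal |fav (i+1) - fav i| := by
          refine add_le_add (ENNReal.ofReal_le_ofReal hendk) ?_
          refine (ENNReal.ofReal_le_ofReal htel).trans ?_
          rw [ENNReal.ofReal_sum_of_nonneg (fun i _ => abs_nonneg _)]
      _ ≤ ENNReal.ofReal ((K:ℝ) * r) + ∑ i ∈ Finset.range k,
            (ENNReal.ofReal CD)^n * (ENNReal.ofReal (M^s) * (ENNReal.ofReal CD)^(n+2)) *
              (T i + T (i+1)) := by
          refine add_le_add_right (Finset.sum_le_sum fun i hi => ?_) _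
          exact hlink i (Finset.mem_range.mp hi)
      _ ≤ ENNReal.ofReal ((K:ℝ) * r) +
            (ENNReal.ofReal CD)^n * (ENNReal.ofReal (M^s) * (ENNReal.ofReal CD)^(n+2)) *
              (2 * ∑ i ∈ Finset.range (k+1), T i) := by
          refine add_le_add_right ?_ _
          rw [← Finset.mul_sum]
          refine mul_le_mul_right ?_ _
          rw [Finset.sum_add_distrib]
          have h1 : ∑ i ∈ Finset.range k, T i ≤ ∑ i ∈ Finset.range (k+1), T i :=
            Finset.sum_le_sum_of_subset (Finset.range_subset_range.mpr (Nat.le_succ k))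
          have h2 : ∑ i ∈ Finset.range k, T (i+1) ≤ ∑ i ∈ Finset.range (k+1), T i := by
            rw [Finset.sum_range_succ' T k]
            exact le_self_add
          calc ∑ i ∈ Finset.range k, T i + ∑ i ∈ Finset.range k, T (i+1)
              ≤ ∑ i ∈ Finset.range (k+1), T i + ∑ i ∈ Finset.range (k+1), T i :=
              add_le_add h1 h2
            _ = 2 * ∑ i ∈ Finset.range (k+1), T i := (two_mul _).symm
      _ ≤ ENNReal.ofReal ((K:ℝ) * r) +
            (ENNReal.ofReal CD)^n * (ENNReal.ofReal (M^s) * (ENNReal.ofReal CD)^(n+2)) *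
              (2 * (ENNReal.ofReal M * riesz)) :=
          add_le_add_right (mul_le_mul_right (mul_le_mul_right hoverlap _) _) _
      _ = ENNReal.ofReal ((K:ℝ) * r) +
            ENNReal.ofReal (2 * M * M^s * CD^(2*n+2)) * riesz := by
          rw [← hconst_eq]; ring
  -- conclude by letting r → 0
  rcases eq_top_or_lt_top (ENNReal.ofReal (2 * M * M^s * CD^(2*n+2)) * riesz) with htop | hfin
  · rw [htop]; exact le_top
  refine ENNReal.le_of_forall_pos_le_add fun ε hε _ => ?_
  have hKpos : (0:ℝ) < (K:ℝ) + 1 := by positivity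
  have hεpos : (0:ℝ) < (ε:ℝ) := hε
  set r : ℝ := min ((ε:ℝ) / ((K:ℝ)+1)) (R/2) with hrdef
  have hrpos : 0 < r := lt_min (by positivity) (by positivity)
  have hrR : r < R := lt_of_le_of_lt (min_le_right _ _) (by linarith)
  have hKr : (K:ℝ) * r ≤ (ε:ℝ) := by
    have h1 : r ≤ (ε:ℝ) / ((K:ℝ)+1) := min_le_left _ _
    have h2 : (0:ℝ) ≤ (K:ℝ) := K.coe_nonneg
    have h3 : (K:ℝ) * ((ε:ℝ) / ((K:ℝ)+1)) ≤ (ε:ℝ) := by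
      rw [← mul_div_assoc, div_le_iff₀ hKpos]
      nlinarith
    nlinarith
  calc ENNReal.ofReal |f x|
      ≤ ENNReal.ofReal ((K:ℝ) * r) +
        ENNReal.ofReal (2 * M * M^s * CD^(2*n+2)) * riesz := key r hrpos hrR
    _ ≤ (ε : ℝ≥0∞) + ENNReal.ofReal (2 * M * M^s * CD^(2*n+2)) * riesz := by
        refine add_le_add_left ?_ _
        rw [← ENNReal.ofReal_coe_nnreal]
        exact ENNReal.ofReal_le_ofReal hKr
    _ = ENNReal.ofReal (2 * M * M^s * CD^(2*n+2)) * riesz + (ε : ℝ≥0∞) := add_comm _ _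


end
end ApDistance
end
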